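/- arXiv:1301.2193 — 4 statements merged into one kernel-verified Lean document; each statement's English description precedes it below -/
import Mathlib

section
/- Let f be a transcendental entire function. If f is log-regular, then f is weakly regular. -/
open Set Filter

/-- The maximum modulus of `f` on the circle of radius `r`. -/
noncomputable def maxMod (f : ℂ → ℂ) (r : ℝ) : ℝ :=
  sSup ((fun z => ‖f z‖) '' {z : ℂ | ‖z‖ = r})

/-- The minimum modulus of `f` on the circle of radius `r`. -/
noncomputable def minMod (f : ℂ → ℂ) (r : ℝ) : ℝ :=
  sInf ((fun z => ‖f z‖) '' {z : ℂ | ‖z‖ = r})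

/-- `f` is a transcendental entire function: entire and not a polynomial. -/
def TranscendentalEntire (f : ℂ → ℂ) : Prop :=
  Differentiable ℂ f ∧ ¬ ∃ p : Polynomial ℂ, ∀ z, f z = p.eval z

/-- `μ_ε(r) = M(r)^ε`. -/
noncomputable def muEps (f : ℂ → ℂ) (ε : ℝ) (r : ℝ) : ℝ := (maxMod f r) ^ ε

/-- The fast escaping set `A(f)`. -/
def fastEscaping (f : ℂ → ℂ) : Set ℂ :=
  {z : ℂ | ∀ R : ℝ, 0 < R → (∀ r ≥ R, r < maxMod f r) →
    ∃ ℓ : ℕ, ∀ n : ℕ, (maxMod f)^[n] R ≤ ‖f^[n + ℓ] z‖}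

/-- The set `Q_ε(f)`. -/
def Qeps (f : ℂ → ℂ) (ε : ℝ) : Set ℂ :=
  {z : ℂ | ∀ R : ℝ, 0 < R → (∀ r ≥ R, r < muEps f ε r) →
    ∃ ℓ : ℕ, ∀ n : ℕ, (muEps f ε)^[n] R ≤ ‖f^[n + ℓ] z‖}

/-- The quite fast escaping set `Q(f) = ⋃_{0<ε<1} Q_ε(f)`. -/
def Qset (f : ℂ → ℂ) : Set ℂ := ⋃ ε ∈ Ioo (0:ℝ) 1, Qeps f ε

/-- `f` is `ε`-regular. -/
def epsRegular (f : ℂ → ℂ) (ε : ℝ) : Prop :=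
  ∀ R : ℝ, 0 < R → (∀ r ≥ R, r < maxMod f r) →
    ∃ r : ℝ, 0 < r ∧ ∀ n : ℕ, (maxMod f)^[n] R ≤ (muEps f ε)^[n] r

/-- `f` is weakly regular: `ε`-regular for every `ε ∈ (0,1)`. -/
def weaklyRegular (f : ℂ → ℂ) : Prop := ∀ ε ∈ Ioo (0:ℝ) 1, epsRegular f ε

/-- `f` is log-regular (characterization from Corollary 4.3). -/
def logRegular (f : ℂ → ℂ) : Prop :=
  ∃ r₁ > (1:ℝ), ∃ k > (1:ℝ), ∃ d > (1:ℝ), ∀ r ≥ r₁,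
    (maxMod f r) ^ (k * d) ≤ maxMod f (r ^ k)

lemma circle_eq (r : ℝ) : {z : ℂ | ‖z‖ = r} = Metric.sphere (0:ℂ) r := by
  ext z; simp [Complex.dist_eq]

lemma maxMod_bdd (f : ℂ → ℂ) (hf : Differentiable ℂ f) (r : ℝ) :
    BddAbove ((fun z => ‖f z‖) '' {z : ℂ | ‖z‖ = r}) := by
  rw [circle_eq]
  exact ((isCompact_sphere (0:ℂ) r).image (continuous_norm.comp hf.continuous)).bddAbove

lemma le_maxMod (f : ℂ → ℂ) (hf : Differentiable ℂ f) (z : ℂ) :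
    ‖f z‖ ≤ maxMod f ‖z‖ :=
  le_csSup (maxMod_bdd f hf _) ⟨z, rfl, rfl⟩

lemma maxMod_nonneg (f : ℂ → ℂ) (hf : Differentiable ℂ f) {r : ℝ} (hr : 0 ≤ r) :
    0 ≤ maxMod f r := by
  have h := le_maxMod f hf (r : ℂ)
  rw [Complex.norm_of_nonneg hr] at h
  exact le_trans (norm_nonneg _) h

lemma maxMod_mono (f : ℂ → ℂ) (hf : Differentiable ℂ f) {r s : ℝ} (h0 : 0 ≤ r)
    (hrs : r ≤ s) : maxMod f r ≤ maxMod f s := by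
  rcases eq_or_lt_of_le hrs with rfl | hlt
  · exact le_rfl
  have hs : 0 < s := lt_of_le_of_lt h0 hlt
  apply csSup_le
  · exact ⟨‖f (r : ℂ)‖, ⟨(r:ℂ), by simp [abs_of_nonneg h0], rfl⟩⟩
  rintro x ⟨z, hz, rfl⟩
  have hz' : ‖z‖ = r := hz
  have hmem : z ∈ closure (Metric.ball (0:ℂ) s) := by
    rw [closure_ball (0:ℂ) (ne_of_gt hs)]
    simp [Complex.dist_eq, hz', hrs]
  refine Complex.norm_le_of_forall_mem_frontier_norm_le Metric.isBounded_ball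
    (hf.diffContOnCl) (fun w hw => ?_) hmem
  rw [frontier_ball (0:ℂ) (ne_of_gt hs)] at hw
  have hws : ‖w‖ = s := by simpa [Complex.dist_eq] using hw
  have := le_maxMod f hf w
  rw [hws] at this
  simpa using this


lemma iter_logreg (f : ℂ → ℂ) (hf : Differentiable ℂ f) {r₁ k d : ℝ}
    (hr₁ : 1 < r₁) (hk : 1 < k) (hd : 1 < d)
    (H : ∀ r ≥ r₁, (maxMod f r) ^ (k * d) ≤ maxMod f (r ^ k)) (m : ℕ) :
    ∀ r ≥ r₁, (maxMod f r) ^ ((k * d) ^ m) ≤ maxMod f (r ^ ((k : ℝ) ^ m)) := by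
  induction m with
  | zero => intro r hr; simp
  | succ m ih =>
    intro r hr
    have hr1 : 1 < r := lt_of_lt_of_le hr₁ hr
    have hr0 : 0 ≤ r := by linarith
    have hkm1 : (1:ℝ) ≤ k ^ m := one_le_pow₀ hk.le
    have hrk : r₁ ≤ r ^ ((k:ℝ) ^ m) := by
      calc r₁ ≤ r := hr
      _ = r ^ (1:ℝ) := (Real.rpow_one r).symm
      _ ≤ r ^ ((k:ℝ) ^ m) := Real.rpow_le_rpow_of_exponent_le hr1.le hkm1
    have key := H _ hrk
    have hM0 : 0 ≤ maxMod f r := maxMod_nonneg f hf hr0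
    calc (maxMod f r) ^ ((k * d) ^ (m + 1))
        = ((maxMod f r) ^ ((k * d) ^ m)) ^ (k * d) := by
          rw [← Real.rpow_mul hM0, pow_succ]
      _ ≤ (maxMod f (r ^ ((k:ℝ) ^ m))) ^ (k * d) :=
          Real.rpow_le_rpow (Real.rpow_nonneg hM0 _) (ih r hr)
            (by positivity)
      _ ≤ maxMod f ((r ^ ((k:ℝ) ^ m)) ^ k) := key
      _ = maxMod f (r ^ ((k:ℝ) ^ (m + 1))) := by
          rw [← Real.rpow_mul hr0, ← pow_succ]

theorem stmt_8 (f : ℂ → ℂ) (hf : TranscendentalEntire f) (h : logRegular f) :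
    weaklyRegular f := by
  obtain ⟨hdiff, -⟩ := hf
  rintro ε ⟨hε0, hε1⟩ R hR0 hR2
  obtain ⟨r₁, hr₁, k, hk, d, hd, H⟩ := h
  obtain ⟨m, hm⟩ : ∃ m : ℕ, 1 / ε < d ^ m := pow_unbounded_of_one_lt (1 / ε) hd
  set K : ℝ := (k : ℝ) ^ m with hK
  have hK1 : (1:ℝ) ≤ K := one_le_pow₀ hk.le
  have hdm : (1:ℝ) ≤ d ^ m * ε := by
    rw [div_lt_iff₀ hε0] at hm; linarith
  have hKε : K ≤ (k * d) ^ m * ε := by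
    rw [mul_pow]
    nlinarith [pow_pos (lt_trans one_pos hk) m, hdm]
  set R' : ℝ := max R r₁ with hR'
  have hR'1 : 1 < R' := lt_of_lt_of_le hr₁ (le_max_right _ _)
  have hR'R : R ≤ R' := le_max_left _ _
  have hR'r₁ : r₁ ≤ R' := le_max_right _ _
  -- the iterates of maxMod starting at R' stay above R'
  have ht : ∀ n, R' ≤ (maxMod f)^[n] R' := by
    intro n
    induction n with
    | zero => simp
    | succ n ih =>
      rw [Function.iterate_succ_apply']
      exact le_trans ih (le_of_lt (hR2 _ (le_trans hR'R ih)))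
  have htR : ∀ n, R ≤ (maxMod f)^[n] R := by
    intro n
    induction n with
    | zero => simp
    | succ n ih =>
      rw [Function.iterate_succ_apply']
      exact le_trans ih (le_of_lt (hR2 _ ih))
  refine ⟨R' ^ K, Real.rpow_pos_of_pos (by linarith) _, fun n => ?_⟩
  -- key invariant
  have key : ∀ n, ((maxMod f)^[n] R') ^ K ≤ (muEps f ε)^[n] (R' ^ K) := by
    intro n
    induction n with
    | zero => simp
    | succ n ih =>
      set t := (maxMod f)^[n] R' with hts
      have htr₁ : r₁ ≤ t := le_trans hR'r₁ (ht n)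
      have ht1 : 1 < t := lt_of_lt_of_le hr₁ htr₁
      have ht0 : (0:ℝ) ≤ t := by linarith
      have hM1 : 1 < maxMod f t := lt_trans ht1 (hR2 t (le_trans hR'R (ht n)))
      have hM0 : (0:ℝ) ≤ maxMod f t := by linarith
      have h1 : maxMod f (t ^ K) ≤ maxMod f ((muEps f ε)^[n] (R' ^ K)) :=
        maxMod_mono f hdiff (Real.rpow_nonneg ht0 _) ih
      have h2 := iter_logreg f hdiff hr₁ hk hd H m t htr₁
      rw [Function.iterate_succ_apply', Function.iterate_succ_apply']
      calc (maxMod f t) ^ K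
          ≤ (maxMod f t) ^ ((k * d) ^ m * ε) :=
            Real.rpow_le_rpow_of_exponent_le hM1.le hKε
        _ = ((maxMod f t) ^ ((k * d) ^ m)) ^ ε := Real.rpow_mul hM0 _ _
        _ ≤ (maxMod f (t ^ K)) ^ ε := Real.rpow_le_rpow (Real.rpow_nonneg hM0 _) h2 hε0.le
        _ ≤ (maxMod f ((muEps f ε)^[n] (R' ^ K))) ^ ε :=
            Real.rpow_le_rpow (maxMod_nonneg f hdiff (Real.rpow_nonneg ht0 _)) h1 hε0.le
        _ = muEps f ε ((muEps f ε)^[n] (R' ^ K)) := rfl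
  -- compare iterates from R and R'
  have hcmp : ∀ n, (maxMod f)^[n] R ≤ (maxMod f)^[n] R' := by
    intro n
    induction n with
    | zero => exact hR'R
    | succ n ih =>
      rw [Function.iterate_succ_apply', Function.iterate_succ_apply']
      exact maxMod_mono f hdiff (le_trans hR0.le (htR n)) ih
  have ht1 : (1:ℝ) ≤ (maxMod f)^[n] R' := le_trans hR'1.le (ht n)
  calc (maxMod f)^[n] R ≤ (maxMod f)^[n] R' := hcmp n
    _ = ((maxMod f)^[n] R') ^ (1:ℝ) := (Real.rpow_one _).symm
    _ ≤ ((maxMod f)^[n] R') ^ K := Real.rpow_le_rpow_of_exponent_le ht1 hK1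
    _ = (maxMod f)^[n] R' ^ K := rfl
    _ ≤ (muEps f ε)^[n] (R' ^ K) := key n
end

section
/- Let φ : ℝ → ℝ be an increasing convex function with φ(t) > 0 for all sufficiently large t, and let φ'(t) denote the right derivative of φ at t (which exists at every point since φ is convex; in Lean it may be expressed as the derivative of φ within Set.Ioi t at t). Then the following three statements are equivalent: (a) there exist t_0 > 0 and c > 0 such that φ'(t)/φ(t) ≥ (1+c)/t for all t ≥ t_0; (b) there exist t_0 > 0 and c > 0 such that for every k > 1, φ(k t) ≥ k^{1+c} φ(t) for all t ≥ t_0; (c) there exist t_1 > 0, k > 1 and d > 1 such that φ(k t) ≥ k d φ(t) for all t ≥ t_1. -/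
open Set Filter

section AuxConvex
variable {φ : ℝ → ℝ}

lemma aux_hasRightDeriv (hconv : ConvexOn ℝ univ φ) (x : ℝ) :
    HasDerivWithinAt φ (sInf (slope φ x '' Ioi x)) (Ioi x) x := by
  have hmono : MonotoneOn (slope φ x) (Ioi x) :=
    (hconv.slope_mono (mem_univ x)).mono (fun y hy => ⟨mem_univ y, ne_of_gt hy⟩)
  have hbdd : BddBelow (slope φ x '' Ioi x) := by
    refine ⟨slope φ x (x - 1), ?_⟩
    rintro z ⟨y, hy, rfl⟩
    exact (hconv.slope_mono (mem_univ x)) ⟨mem_univ _, by simp⟩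
      ⟨mem_univ _, ne_of_gt hy⟩ (by linarith [mem_Ioi.1 hy])
  rw [hasDerivWithinAt_iff_tendsto_slope' (notMem_Ioi_self)]
  exact hmono.tendsto_nhdsGT hbdd

lemma aux_diffRight (hconv : ConvexOn ℝ univ φ) (x : ℝ) :
    DifferentiableWithinAt ℝ φ (Ioi x) x :=
  (aux_hasRightDeriv hconv x).differentiableWithinAt

lemma aux_slope_le_rightDeriv (hconv : ConvexOn ℝ univ φ) {w x : ℝ} (hwx : w < x) :
    slope φ w x ≤ derivWithin φ (Ioi x) x := by
  rw [(aux_hasRightDeriv hconv x).derivWithin (uniqueDiffWithinAt_Ioi x)]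
  apply le_csInf (by exact ⟨slope φ x (x + 1), ⟨x + 1, by simp, rfl⟩⟩)
  rintro z ⟨y, hy, rfl⟩
  rw [slope_comm]
  exact (hconv.slope_mono (mem_univ x)) ⟨mem_univ _, ne_of_lt hwx⟩
    ⟨mem_univ _, ne_of_gt hy⟩ (hwx.le.trans (mem_Ioi.1 hy).le)

lemma aux_rightDeriv_le_slope (hconv : ConvexOn ℝ univ φ) {x y : ℝ} (hxy : x < y) :
    derivWithin φ (Ioi x) x ≤ slope φ x y :=
  hconv.rightDeriv_le_slope (mem_univ x) (mem_univ y) hxy (aux_diffRight hconv x)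

lemma aux_AtoC (hconv : ConvexOn ℝ univ φ) (hpos : ∃ T : ℝ, ∀ t ≥ T, 0 < φ t)
    (hA : ∃ t₀ > (0:ℝ), ∃ c > (0:ℝ), ∀ t ≥ t₀,
        (1 + c) / t ≤ derivWithin φ (Ioi t) t / φ t) :
    ∃ t₁ > (0:ℝ), ∃ k > (1:ℝ), ∃ d > (1:ℝ), ∀ t ≥ t₁, k * d * φ t ≤ φ (k * t) := by
  obtain ⟨t₀, ht₀, c, hc, hA⟩ := hA
  obtain ⟨T, hT⟩ := hpos
  refine ⟨max t₀ T, lt_of_lt_of_le ht₀ (le_max_left _ _), 2, one_lt_two, 1 + c/2,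
    by linarith, ?_⟩
  intro t ht
  have htt : t ≥ t₀ := le_trans (le_max_left _ _) ht
  have hφ : 0 < φ t := hT t (le_trans (le_max_right _ _) ht)
  have htp : 0 < t := lt_of_lt_of_le ht₀ htt
  have h1 := hA t htt
  rw [div_le_div_iff₀ htp hφ] at h1
  have h2 : derivWithin φ (Ioi t) t ≤ slope φ t (2 * t) :=
    aux_rightDeriv_le_slope hconv (by linarith)
  rw [slope_def_field] at h2
  have h3 : derivWithin φ (Ioi t) t * (2 * t - t) ≤ φ (2 * t) - φ t := by
    rw [← le_div_iff₀ (by linarith)]; exact h2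
  nlinarith [h1, h3]

lemma aux_CtoA (hconv : ConvexOn ℝ univ φ) (hpos : ∃ T : ℝ, ∀ t ≥ T, 0 < φ t)
    (hC : ∃ t₁ > (0:ℝ), ∃ k > (1:ℝ), ∃ d > (1:ℝ), ∀ t ≥ t₁, k * d * φ t ≤ φ (k * t)) :
    ∃ t₀ > (0:ℝ), ∃ c > (0:ℝ), ∀ t ≥ t₀,
        (1 + c) / t ≤ derivWithin φ (Ioi t) t / φ t := by
  obtain ⟨t₁, ht₁, k, hk, d, hd, H⟩ := hC
  obtain ⟨T, hT⟩ := hpos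
  have hkp : (0:ℝ) < k := by linarith
  have hdp : (0:ℝ) < d := by linarith
  refine ⟨max (k * t₁) T, lt_of_lt_of_le (by positivity) (le_max_left _ _),
    (d - 1) / (d * (k - 1)), div_pos (by linarith) (by nlinarith), ?_⟩
  intro t ht
  set c := (d - 1) / (d * (k - 1)) with hcdef
  have hφ : 0 < φ t := hT t (le_trans (le_max_right _ _) ht)
  have htk : k * t₁ ≤ t := le_trans (le_max_left _ _) ht
  have htp : 0 < t := lt_of_lt_of_le (by positivity) htk
  have hu : t₁ ≤ t / k := by rw [le_div_iff₀ hkp]; linarith [htk]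
  have h2 : k * d * φ (t / k) ≤ φ t := by
    have := H (t / k) hu
    rwa [mul_div_cancel₀ _ (ne_of_gt hkp)] at this
  have hult : t / k < t := div_lt_self htp hk
  have h3 : slope φ (t / k) t ≤ derivWithin φ (Ioi t) t :=
    aux_slope_le_rightDeriv hconv hult
  rw [slope_def_field] at h3
  have h4 : φ t - φ (t / k) ≤ derivWithin φ (Ioi t) t * (t - t / k) := by
    rw [← div_le_iff₀ (by linarith)]; exact h3
  rw [div_le_div_iff₀ htp hφ]
  have hc' : c * (d * (k - 1)) = d - 1 := div_mul_cancel₀ _ (ne_of_gt (by nlinarith))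
  have huk : k * (t / k) = t := mul_div_cancel₀ _ (ne_of_gt hkp)
  set D := derivWithin φ (Ioi t) t
  set u := t / k
  -- from h4 : φ t - φ u ≤ D * (t - u), t = k * u
  -- from h2 : k * d * φ u ≤ φ t
  -- want (1 + c) * φ t ≤ D * t
  have h5 : D * d * (k * u) = D * d * t := by rw [huk]
  have key : (k * d - 1) * φ t ≤ D * t * (d * (k - 1)) := by
    nlinarith [mul_le_mul_of_nonneg_left h4 (show (0:ℝ) ≤ k * d by positivity), h2, h5, hφ]
  have hpos2 : (0:ℝ) < d * (k - 1) := by nlinarith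
  rw [← mul_le_mul_iff_of_pos_right hpos2]
  have hc'' : φ t * (c * (d * (k - 1))) = φ t * (d - 1) := by rw [hc']
  nlinarith [key, hc'']


lemma aux_BtoC
    (hB : ∃ t₀ > (0:ℝ), ∃ c > (0:ℝ), ∀ k > (1:ℝ), ∀ t ≥ t₀, k ^ (1 + c) * φ t ≤ φ (k * t)) :
    ∃ t₁ > (0:ℝ), ∃ k > (1:ℝ), ∃ d > (1:ℝ), ∀ t ≥ t₁, k * d * φ t ≤ φ (k * t) := by
  obtain ⟨t₀, ht₀, c, hc, hB⟩ := hB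
  refine ⟨t₀, ht₀, 2, one_lt_two, (2:ℝ) ^ c, ?_, ?_⟩
  · rw [show (1:ℝ) = (2:ℝ) ^ (0:ℝ) by simp]
    exact Real.rpow_lt_rpow_left_iff one_lt_two |>.2 hc
  · intro t ht
    have := hB 2 one_lt_two t ht
    rwa [Real.rpow_add two_pos, Real.rpow_one] at this

set_option maxHeartbeats 1000000 in
lemma aux_CtoB (hconv : ConvexOn ℝ univ φ) (hmono : Monotone φ)
    (hpos : ∃ T : ℝ, ∀ t ≥ T, 0 < φ t)
    (hC : ∃ t₁ > (0:ℝ), ∃ k > (1:ℝ), ∃ d > (1:ℝ), ∀ t ≥ t₁, k * d * φ t ≤ φ (k * t)) :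
    ∃ t₀ > (0:ℝ), ∃ c > (0:ℝ), ∀ k > (1:ℝ), ∀ t ≥ t₀, k ^ (1 + c) * φ t ≤ φ (k * t) := by
  obtain ⟨t₁, ht₁, k₀, hk₀, d, hd, H⟩ := hC
  obtain ⟨T, hT⟩ := hpos
  have hk₀p : (0:ℝ) < k₀ := by linarith
  have hdp : (0:ℝ) < d := by linarith
  set t₂ := max t₁ T with ht₂def
  have ht₂pos : 0 < t₂ := lt_of_lt_of_le ht₁ (le_max_left _ _)
  have hφ₂ : ∀ t ≥ t₂, 0 < φ t := fun t ht => hT t (le_trans (le_max_right _ _) ht)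
  have H₂ : ∀ t ≥ t₂, k₀ * d * φ t ≤ φ (k₀ * t) :=
    fun t ht => H t (le_trans (le_max_left _ _) ht)
  set α := (k₀ * d - 1) / (d * (k₀ - 1)) with hαdef
  have hden : (0:ℝ) < d * (k₀ - 1) := by nlinarith
  have hα : 1 < α := by rw [lt_div_iff₀ hden]; nlinarith
  have hα' : α * (d * (k₀ - 1)) = k₀ * d - 1 := div_mul_cancel₀ _ (ne_of_gt hden)
  set t₃ := k₀ * t₂ with ht₃def
  have ht₃pos : 0 < t₃ := by positivity
  have ht₂₃ : t₂ ≤ t₃ := by nlinarith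
  -- Step 1 : near-1 lower bound from convexity
  have Step1 : ∀ t ≥ t₃, ∀ s ≥ (1:ℝ), (1 + α * (s - 1)) * φ t ≤ φ (s * t) := by
    intro t ht s hs
    rcases eq_or_lt_of_le hs with rfl | hs1
    · simp
    have htp : 0 < t := lt_of_lt_of_le ht₃pos ht
    have hu2 : t₂ ≤ t / k₀ := by rw [le_div_iff₀ hk₀p]; calc
        t₂ * k₀ = k₀ * t₂ := mul_comm _ _
        _ ≤ t := ht
    have hφt : 0 < φ t := hφ₂ t (le_trans ht₂₃ ht)
    have h2 : k₀ * d * φ (t / k₀) ≤ φ t := by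
      have := H₂ (t / k₀) hu2
      rwa [mul_div_cancel₀ _ (ne_of_gt hk₀p)] at this
    have hult : t / k₀ < t := div_lt_self htp hk₀
    have hst : t < s * t := by nlinarith
    have hadj := hconv.slope_mono_adjacent (mem_univ (t / k₀)) (mem_univ (s * t)) hult hst
    set u := t / k₀ with hudef
    have huk : k₀ * u = t := mul_div_cancel₀ _ (ne_of_gt hk₀p)
    have hup : 0 < u := by positivity
    have hp1 : (φ t - φ u) * (s * t - t) ≤ (φ (s * t) - φ t) * (t - u) := by
      rw [div_le_div_iff₀ (by linarith) (by nlinarith)] at hadj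
      linarith
    -- multiply out: want (1 + α (s-1)) φ t ≤ φ (s t)
    have e1 : s * t - t = (s - 1) * (k₀ * u) := by rw [huk]; ring
    have e2 : t - u = (k₀ - 1) * u := by rw [← huk]; ring
    rw [e1, e2] at hp1
    -- hp1 : (φ t - φ u) * ((s-1) * (k₀ * u)) ≤ (φ (s t) - φ t) * ((k₀ - 1) * u)
    -- h2 : k₀ d φ u ≤ φ t
    have key : (k₀ * d - 1) * (s - 1) * φ t ≤ (φ (s * t) - φ t) * (d * (k₀ - 1)) := by
      have hm := mul_le_mul_of_nonneg_left h2
        (show (0:ℝ) ≤ (s - 1) * u by nlinarith)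
      nlinarith [hp1, hm, hup, hφt, hs1]
    rw [← mul_le_mul_iff_of_pos_right hden]
    have hα'' : ((s - 1) * φ t) * (α * (d * (k₀ - 1))) = ((s - 1) * φ t) * (k₀ * d - 1) := by
      rw [hα']
    nlinarith [key, hα'']
  -- Step 3 : iteration
  have Step3 : ∀ n : ℕ, ∀ t ≥ t₂, (k₀ * d) ^ n * φ t ≤ φ (k₀ ^ n * t) := by
    intro n
    induction n with
    | zero => intro t _; simp
    | succ n ih =>
      intro t ht
      have htp : 0 < t := lt_of_lt_of_le ht₂pos ht
      have h1 := ih t ht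
      have hge : t₂ ≤ k₀ ^ n * t :=
        le_trans ht (le_mul_of_one_le_left htp.le (one_le_pow₀ hk₀.le))
      have h2 := H₂ (k₀ ^ n * t) hge
      calc (k₀ * d) ^ (n + 1) * φ t = (k₀ * d) * ((k₀ * d) ^ n * φ t) := by ring
        _ ≤ (k₀ * d) * φ (k₀ ^ n * t) :=
            mul_le_mul_of_nonneg_left h1 (by positivity)
        _ ≤ φ (k₀ * (k₀ ^ n * t)) := h2
        _ = φ (k₀ ^ (n + 1) * t) := by ring_nf
  -- Step 2 : choose c with (1+c) * k₀ ^ c ≤ α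
  obtain ⟨c, hc0, hck⟩ : ∃ c > (0:ℝ), (1 + c) * k₀ ^ c ≤ α := by
    have hcontat : ContinuousAt (fun c : ℝ => (1 + c) * k₀ ^ c) 0 :=
      (continuousAt_const.add continuousAt_id).mul
        (Real.continuousAt_const_rpow (ne_of_gt hk₀p))
    have hval : ((1:ℝ) + 0) * k₀ ^ (0:ℝ) = 1 := by simp
    have htend : Tendsto (fun c : ℝ => (1 + c) * k₀ ^ c) (nhdsWithin 0 (Ioi 0)) (nhds 1) := by
      have h2 := hcontat.tendsto.mono_left (nhdsWithin_le_nhds (s := Ioi 0))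
      simpa using h2
    have hev : ∀ᶠ c in nhdsWithin 0 (Ioi 0), (1 + c) * k₀ ^ c < α :=
      htend.eventually (eventually_lt_nhds hα)
    obtain ⟨c, hc1, hc2⟩ := (hev.and self_mem_nhdsWithin).exists
    exact ⟨c, hc2, hc1.le⟩
  -- Step 2' : s ^ (1+c) ≤ 1 + α (s-1) for s ∈ [1, k₀]
  have Step2 : ∀ s : ℝ, 1 ≤ s → s ≤ k₀ → s ^ (1 + c) ≤ 1 + α * (s - 1) := by
    intro s h1s hsk
    have hsp : 0 < s := lt_of_lt_of_le one_pos h1s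
    have hinv : (0:ℝ) < 1 / s := by positivity
    have hb := one_add_mul_self_le_rpow_one_add (s := 1 / s - 1) (by linarith)
      (p := 1 + c) (by linarith)
    rw [show (1:ℝ) + (1 / s - 1) = 1 / s by ring] at hb
    have hA : s ^ (1 + c) = s * s ^ c := by
      rw [Real.rpow_add hsp, Real.rpow_one]
    have hmul : s ^ (1 + c) * (1 / s) ^ (1 + c) = 1 := by
      rw [← Real.mul_rpow hsp.le hinv.le, mul_one_div_cancel (ne_of_gt hsp),
        Real.one_rpow]
    have hspow : 0 < s ^ (1 + c) := Real.rpow_pos_of_pos hsp _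
    have h3 : s ^ (1 + c) * (1 + (1 + c) * (1 / s - 1)) ≤ 1 := by
      calc s ^ (1 + c) * (1 + (1 + c) * (1 / s - 1))
          ≤ s ^ (1 + c) * (1 / s) ^ (1 + c) := mul_le_mul_of_nonneg_left hb hspow.le
        _ = 1 := hmul
    set A := s ^ c with hAdef
    have hApos : 0 < A := Real.rpow_pos_of_pos hsp _
    have e : s * A * (1 + (1 + c) * (1 / s - 1)) = s * A + (1 + c) * (A - s * A) := by
      field_simp
    rw [hA, e] at h3
    -- h3 : s * A + (1+c) * (A - s * A) ≤ 1 ; goal : s * A ≤ 1 + α * (s-1)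
    have h5 : A ≤ k₀ ^ c := Real.rpow_le_rpow hsp.le hsk hc0.le
    have h6 : (1 + c) * (s - 1) * A ≤ (1 + c) * (s - 1) * k₀ ^ c :=
      mul_le_mul_of_nonneg_left h5 (by nlinarith)
    have h7 : (1 + c) * k₀ ^ c * (s - 1) ≤ α * (s - 1) :=
      mul_le_mul_of_nonneg_right hck (by linarith)
    rw [hA]
    nlinarith [h3, h6, h7]
  -- final assembly
  set cd := Real.logb k₀ d with hcddef
  have hcd : 0 < cd := Real.logb_pos hk₀ hd
  set c' := min c cd with hc'def
  have hc'0 : 0 < c' := lt_min hc0 hcd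
  refine ⟨t₃, ht₃pos, c', hc'0, ?_⟩
  intro k hk t ht
  have htp : 0 < t := lt_of_lt_of_le ht₃pos ht
  have hkp : (0:ℝ) < k := by linarith
  set m := ⌊Real.logb k₀ k⌋₊ with hmdef
  have hlogb : 0 < Real.logb k₀ k := Real.logb_pos hk₀ hk
  have hm1 : (m:ℝ) ≤ Real.logb k₀ k := Nat.floor_le hlogb.le
  have hm2 : Real.logb k₀ k < (m:ℝ) + 1 := Nat.lt_floor_add_one _
  have hklogb : k₀ ^ Real.logb k₀ k = k := Real.rpow_logb hk₀p (ne_of_gt hk₀) hkp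
  set K := k₀ ^ (m:ℝ) with hKdef
  have hKpos : 0 < K := Real.rpow_pos_of_pos hk₀p _
  have hK1 : 1 ≤ K := Real.one_le_rpow hk₀.le (Nat.cast_nonneg m)
  have hkm_le : K ≤ k := by
    rw [← hklogb]; exact Real.rpow_le_rpow_of_exponent_le hk₀.le hm1
  have hk_lt : k < K * k₀ := by
    have : k < k₀ ^ ((m:ℝ) + 1) := by
      rw [← hklogb]; exact Real.rpow_lt_rpow_of_exponent_lt hk₀ hm2
    rwa [Real.rpow_add hk₀p, Real.rpow_one] at this
  set s := k / K with hsdef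
  have hs1 : 1 ≤ s := (one_le_div hKpos).2 hkm_le
  have hsk : s ≤ k₀ := by
    rw [div_le_iff₀ hKpos]; nlinarith
  have hsm : s * K = k := div_mul_cancel₀ _ (ne_of_gt hKpos)
  -- pieces
  have hKt : t₃ ≤ K * t := le_trans ht (le_mul_of_one_le_left htp.le hK1)
  have P1 : (1 + α * (s - 1)) * φ (K * t) ≤ φ (s * (K * t)) := Step1 (K * t) hKt s hs1
  have P2 : (k₀ * d) ^ m * φ t ≤ φ (k₀ ^ m * t) := Step3 m t (le_trans ht₂₃ ht)
  have hnat : K = k₀ ^ m := Real.rpow_natCast k₀ m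
  have hkd : k₀ * d = k₀ ^ (1 + cd) := by
    rw [Real.rpow_add hk₀p, Real.rpow_one, hcddef, Real.rpow_logb hk₀p (ne_of_gt hk₀) hdp]
  have hpow : ((k₀ * d) ^ m : ℝ) = k₀ ^ ((1 + cd) * (m:ℝ)) := by
    rw [hkd, ← Real.rpow_natCast (k₀ ^ (1 + cd)) m, ← Real.rpow_mul hk₀p.le]
  have Q1 : K ^ (1 + c') ≤ (k₀ * d) ^ m := by
    rw [hpow, hKdef, ← Real.rpow_mul hk₀p.le]
    apply Real.rpow_le_rpow_of_exponent_le hk₀.le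
    have : c' ≤ cd := min_le_right _ _
    nlinarith [Nat.cast_nonneg (α := ℝ) m]
  have Q2 : s ^ (1 + c') ≤ 1 + α * (s - 1) := by
    calc s ^ (1 + c') ≤ s ^ (1 + c) :=
          Real.rpow_le_rpow_of_exponent_le hs1 (by linarith [min_le_left c cd])
      _ ≤ 1 + α * (s - 1) := Step2 s hs1 hsk
  have hφt : 0 < φ t := hφ₂ t (le_trans ht₂₃ ht)
  have hφKt : 0 < φ (K * t) := hφ₂ (K * t) (le_trans (le_trans ht₂₃ ht)
    (le_mul_of_one_le_left htp.le hK1))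
  have hsc'pos : 0 ≤ s ^ (1 + c') := (Real.rpow_pos_of_pos (by linarith) _).le
  have hKc'pos : 0 ≤ K ^ (1 + c') := (Real.rpow_pos_of_pos hKpos _).le
  have hkt : k * t = s * (K * t) := by rw [← hsm]; ring
  have hkrpow : k ^ (1 + c') = s ^ (1 + c') * K ^ (1 + c') := by
    rw [← hsm, Real.mul_rpow (by linarith) hKpos.le]
  rw [hkt, hkrpow]
  calc s ^ (1 + c') * K ^ (1 + c') * φ t
      ≤ s ^ (1 + c') * ((k₀ * d) ^ m * φ t) := by
        rw [mul_assoc]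
        exact mul_le_mul_of_nonneg_left
          (mul_le_mul_of_nonneg_right Q1 hφt.le) hsc'pos
    _ ≤ s ^ (1 + c') * φ (k₀ ^ m * t) := mul_le_mul_of_nonneg_left P2 hsc'pos
    _ = s ^ (1 + c') * φ (K * t) := by rw [hnat]
    _ ≤ (1 + α * (s - 1)) * φ (K * t) := mul_le_mul_of_nonneg_right Q2 hφKt.le
    _ ≤ φ (s * (K * t)) := P1

end AuxConvex

theorem stmt_9 (φ : ℝ → ℝ) (hconv : ConvexOn ℝ univ φ) (hmono : Monotone φ)
    (hpos : ∃ T : ℝ, ∀ t ≥ T, 0 < φ t) :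
    ((∃ t₀ > (0:ℝ), ∃ c > (0:ℝ), ∀ t ≥ t₀,
        (1 + c) / t ≤ derivWithin φ (Ioi t) t / φ t) ↔
      (∃ t₀ > (0:ℝ), ∃ c > (0:ℝ), ∀ k > (1:ℝ), ∀ t ≥ t₀,
        k ^ (1 + c) * φ t ≤ φ (k * t))) ∧
    ((∃ t₀ > (0:ℝ), ∃ c > (0:ℝ), ∀ k > (1:ℝ), ∀ t ≥ t₀,
        k ^ (1 + c) * φ t ≤ φ (k * t)) ↔
      (∃ t₁ > (0:ℝ), ∃ k > (1:ℝ), ∃ d > (1:ℝ), ∀ t ≥ t₁,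
        k * d * φ t ≤ φ (k * t))) := by
  refine ⟨⟨fun hA => aux_CtoB hconv hmono hpos (aux_AtoC hconv hpos hA),
    fun hB => aux_CtoA hconv hpos (aux_BtoC hB)⟩,
    ⟨aux_BtoC, aux_CtoB hconv hmono hpos⟩⟩
end

section
/- Let f be a transcendental entire function. Then the following are equivalent: (b) there exist r_0 > 1 and c > 0 such that for every k > 1, M(r^k) ≥ M(r)^{k·k^c} for all r ≥ r_0; (c) there exist r_1 > 1, k > 1 and d > 1 such that M(r^k) ≥ M(r)^{kd} for all r ≥ r_1. -/
open Set Filter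

namespace Stmt10Aux

lemma sphereSet (r : ℝ) : {z : ℂ | ‖z‖ = r} = Metric.sphere (0:ℂ) r := by
  ext z
  simp [Metric.mem_sphere, Complex.dist_eq]

lemma maxMod_exists {f : ℂ → ℂ} (hc : Continuous f) {r : ℝ} (hr : 0 ≤ r) :
    ∃ z : ℂ, ‖z‖ = r ∧ maxMod f r = ‖f z‖ := by
  have hne : ({z : ℂ | ‖z‖ = r} : Set ℂ).Nonempty := by
    refine ⟨(r : ℂ), ?_⟩
    simp only [Set.mem_setOf_eq, Complex.norm_real, Real.norm_eq_abs]
    exact abs_of_nonneg hr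
  have hcmp : IsCompact {z : ℂ | ‖z‖ = r} := by
    rw [sphereSet]; exact isCompact_sphere _ _
  obtain ⟨z, hz, hzeq⟩ := hcmp.exists_sSup_image_eq hne
    ((continuous_norm.comp hc).continuousOn)
  exact ⟨z, hz, hzeq⟩

lemma le_maxMod {f : ℂ → ℂ} (hc : Continuous f) (z : ℂ) :
    ‖f z‖ ≤ maxMod f (‖z‖) := by
  have hbdd : BddAbove ((fun w => ‖f w‖) ''
      {w : ℂ | ‖w‖ = ‖z‖}) := by
    rw [sphereSet]
    exact (((isCompact_sphere _ _)).image (continuous_norm.comp hc)).bddAbove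
  exact le_csSup hbdd ⟨z, rfl, rfl⟩

lemma le_maxMod' {f : ℂ → ℂ} (hc : Continuous f) {z : ℂ} {r : ℝ}
    (hz : ‖z‖ = r) : ‖f z‖ ≤ maxMod f r := by
  rw [← hz]; exact le_maxMod hc z

lemma maxMod_mono {f : ℂ → ℂ} (hf : Differentiable ℂ f) {r R : ℝ} (hr : 0 ≤ r)
    (hrR : r ≤ R) : maxMod f r ≤ maxMod f R := by
  rcases eq_or_lt_of_le hrR with h | hR
  · rw [h]
  have hR0 : 0 < R := hr.trans_lt hR
  obtain ⟨z, hz, hzeq⟩ := maxMod_exists hf.continuous hr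
  rw [hzeq]
  have := Complex.norm_le_of_forall_mem_frontier_norm_le (U := Metric.ball (0:ℂ) R)
    Metric.isBounded_ball hf.diffContOnCl (C := maxMod f R) ?_ (z := z) ?_
  · simpa using this
  · intro w hw
    rw [frontier_ball _ (ne_of_gt hR0)] at hw
    have hwr : ‖w‖ = R := by
      simpa [Complex.dist_eq] using hw
    simpa using le_maxMod' hf.continuous hwr
  · rw [closure_ball _ (ne_of_gt hR0)]
    simp only [Metric.mem_closedBall, Complex.dist_eq, sub_zero]
    rw [hz]; exact hrR

lemma exists_maxMod_gt_one {f : ℂ → ℂ} (hf : TranscendentalEntire f) :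
    ∃ r₂ : ℝ, 1 ≤ r₂ ∧ ∀ r ≥ r₂, 1 < maxMod f r := by
  by_contra h
  push_neg at h
  have hb : ∀ z : ℂ, ‖f z‖ ≤ 1 := by
    intro z
    obtain ⟨r, hr, hr1⟩ := h (max (‖z‖) 1) (le_max_right _ _)
    have h1 : ‖f z‖ ≤ maxMod f (‖z‖) := le_maxMod hf.1.continuous z
    have h2 : maxMod f (‖z‖) ≤ maxMod f r :=
      maxMod_mono hf.1 (norm_nonneg z) ((le_max_left _ _).trans hr)
    calc ‖f z‖ = ‖f z‖ := rfl
      _ ≤ 1 := (h1.trans h2).trans hr1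
  have hbdd : Bornology.IsBounded (Set.range f) := by
    rw [isBounded_iff_forall_norm_le]
    exact ⟨1, by rintro x ⟨z, rfl⟩; exact hb z⟩
  obtain ⟨c, hc⟩ := hf.1.exists_eq_const_of_bounded hbdd
  exact hf.2 ⟨Polynomial.C c, fun z => by rw [hc]; simp⟩


lemma maxMod_three_circles {f : ℂ → ℂ} (hf : Differentiable ℂ f) {ρ₁ ρ₂ ρ₃ : ℝ}
    (h0 : 0 < ρ₁) (h12 : ρ₁ < ρ₂) (h23 : ρ₂ < ρ₃) :
    maxMod f ρ₂ ≤ (maxMod f ρ₁) ^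
        (1 - (Real.log ρ₂ - Real.log ρ₁) / (Real.log ρ₃ - Real.log ρ₁)) *
      (maxMod f ρ₃) ^ ((Real.log ρ₂ - Real.log ρ₁) / (Real.log ρ₃ - Real.log ρ₁)) := by
  set t₁ := Real.log ρ₁ with ht₁
  set t₂ := Real.log ρ₂ with ht₂
  set t₃ := Real.log ρ₃ with ht₃
  have h02 : (0:ℝ) < ρ₂ := h0.trans h12
  have h03 : (0:ℝ) < ρ₃ := h02.trans h23
  have ht12 : t₁ < t₂ := Real.log_lt_log h0 h12
  have ht23 : t₂ < t₃ := Real.log_lt_log h02 h23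
  have hL : (0:ℝ) < t₃ - t₁ := by linarith
  set x : ℝ := (t₂ - t₁) / (t₃ - t₁) with hx
  have hx0 : 0 < x := div_pos (by linarith) hL
  have hx1 : x ≤ 1 := (div_le_one hL).mpr (by linarith)
  obtain ⟨z₂, hz₂, hz₂eq⟩ := maxMod_exists hf.continuous h02.le
  set θ := z₂.arg with hθ
  set w : ℂ → ℂ := fun z => (t₁ : ℂ) + z * ((t₃ - t₁ : ℝ) : ℂ) + (θ : ℂ) * Complex.I with hw
  set g : ℂ → ℂ := fun z => f (Complex.exp (w z)) with hg
  have habs : ∀ z : ℂ, ‖Complex.exp (w z)‖ = Real.exp (t₁ + z.re * (t₃ - t₁)) := by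
    intro z
    rw [Complex.norm_exp]
    congr 1
    simp [hw, Complex.add_re, Complex.mul_re, Complex.ofReal_re, Complex.ofReal_im,
      Complex.I_re, Complex.I_im]
  have hwdiff : Differentiable ℂ w := by
    apply Differentiable.add
    · exact (differentiable_id.mul_const _).const_add _
    · exact differentiable_const _
  have hgdiff : Differentiable ℂ g := hf.comp (Complex.differentiable_exp.comp hwdiff)
  have key : ∀ z : ℂ, z.re ∈ Set.Icc (0:ℝ) 1 → ‖g z‖ ≤ maxMod f ρ₃ := by
    intro z hz
    have h1 : ‖Complex.exp (w z)‖ ≤ ρ₃ := by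
      rw [habs z]
      calc Real.exp (t₁ + z.re * (t₃ - t₁)) ≤ Real.exp t₃ := by
            apply Real.exp_le_exp.mpr
            nlinarith [hz.1, hz.2]
        _ = ρ₃ := Real.exp_log h03
    calc ‖g z‖ ≤ maxMod f (‖Complex.exp (w z)‖) :=
          le_maxMod hf.continuous _
      _ ≤ maxMod f ρ₃ := maxMod_mono hf (norm_nonneg _) h1
  have hB : BddAbove ((norm ∘ g) '' (Complex.HadamardThreeLines.verticalClosedStrip 0 1)) := by
    refine ⟨maxMod f ρ₃, ?_⟩
    rintro y ⟨z, hz, rfl⟩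
    simpa using key z hz
  have ha : ∀ z ∈ Complex.re ⁻¹' {0}, ‖g z‖ ≤ maxMod f ρ₁ := by
    intro z hz
    have hz0 : z.re = 0 := hz
    have habs1 : ‖Complex.exp (w z)‖ = ρ₁ := by
      rw [habs z, hz0]
      simpa using Real.exp_log h0
    simpa using le_maxMod' hf.continuous habs1
  have hb : ∀ z ∈ Complex.re ⁻¹' {1}, ‖g z‖ ≤ maxMod f ρ₃ := by
    intro z hz
    have hz1 : z.re = 1 := hz
    have habs3 : ‖Complex.exp (w z)‖ = ρ₃ := by
      rw [habs z, hz1]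
      rw [one_mul]
      have : t₁ + (t₃ - t₁) = t₃ := by ring
      rw [this]
      exact Real.exp_log h03
    simpa using le_maxMod' hf.continuous habs3
  have hmem : (x:ℂ) ∈ Complex.HadamardThreeLines.verticalClosedStrip 0 1 := by
    simp only [Complex.HadamardThreeLines.verticalClosedStrip, Set.mem_preimage,
      Complex.ofReal_re, Set.mem_Icc]
    exact ⟨hx0.le, hx1⟩
  have hmain := Complex.HadamardThreeLines.norm_le_interp_of_mem_verticalClosedStrip' (by norm_num : (0:ℝ) < 1)
    hmem hgdiff.diffContOnCl hB ha hb
  have hgx : g (x:ℂ) = f z₂ := by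
    have hwx : w (x:ℂ) = (t₂ : ℂ) + (θ : ℂ) * Complex.I := by
      rw [hw]
      simp only
      have : ((x:ℝ):ℂ) * ((t₃ - t₁ : ℝ) : ℂ) = ((t₂ - t₁ : ℝ) : ℂ) := by
        rw [← Complex.ofReal_mul]
        congr 1
        rw [hx]
        field_simp
      rw [this]
      push_cast
      ring
    rw [hg]
    simp only
    rw [hwx, Complex.exp_add, ← Complex.ofReal_exp, Real.exp_log h02]
    congr 1
    rw [hθ, ← hz₂]
    exact Complex.norm_mul_exp_arg_mul_I z₂
  rw [hgx, ← hz₂eq, Complex.ofReal_re, sub_zero, sub_zero, div_one] at hmain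
  exact hmain

lemma small_exp_bound {K K₀ β c : ℝ} (hK : 1 < K) (hKK₀ : K ≤ K₀) (hβ : 1 < β)
    (hc0 : 0 < c) (hc1 : c ≤ 1) (hcβ : c ≤ (β - 1) / K₀ ^ 2) :
    K * K ^ c ≤ 1 + β * (K - 1) := by
  have hK0 : (0:ℝ) < K := by linarith
  have hK₀1 : 1 < K₀ := lt_of_lt_of_le hK hKK₀
  have hlogK : 0 < Real.log K := Real.log_pos hK
  set u := c * Real.log K with hu
  have hu0 : 0 ≤ u := by positivity
  have hKc : K ^ c = Real.exp u := by rw [Real.rpow_def_of_pos hK0, mul_comm]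
  -- exp u ≤ 1 + u * exp u
  have h1 : Real.exp u ≤ 1 + u * Real.exp u := by
    have h2 : (1 - u) * Real.exp u ≤ 1 := by
      have h3 := Real.add_one_le_exp (-u)
      calc (1 - u) * Real.exp u ≤ Real.exp (-u) * Real.exp u := by
            apply mul_le_mul_of_nonneg_right _ (Real.exp_pos u).le
            linarith
        _ = 1 := by rw [← Real.exp_add]; simp
    nlinarith
  have h2 : Real.log K ≤ K - 1 := Real.log_le_sub_one_of_pos hK0
  have h3 : K ^ c ≤ K₀ := by
    calc K ^ c ≤ K ^ (1:ℝ) := Real.rpow_le_rpow_of_exponent_le hK.le hc1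
      _ = K := Real.rpow_one K
      _ ≤ K₀ := hKK₀
  have h4 : c * K₀ ^ 2 ≤ β - 1 := (le_div_iff₀ (by positivity)).mp hcβ
  -- K^c ≤ 1 + c * (K-1) * K₀
  have h5 : u * Real.exp u ≤ c * (K - 1) * K₀ := by
    rw [← hKc, hu]
    have : c * Real.log K * K ^ c ≤ c * (K - 1) * K₀ := by
      apply mul_le_mul _ h3 (by positivity) (by nlinarith)
      exact mul_le_mul_of_nonneg_left h2 hc0.le
    linarith
  have h6 : K ^ c ≤ 1 + c * (K - 1) * K₀ := by
    rw [hKc]; linarith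
  have h7 : K * K ^ c ≤ K * (1 + c * (K - 1) * K₀) :=
    mul_le_mul_of_nonneg_left h6 hK0.le
  have h8 : c * (K - 1) * K₀ * K ≤ c * (K - 1) * K₀ * K₀ := by
    apply mul_le_mul_of_nonneg_left hKK₀
    have : (0:ℝ) ≤ K - 1 := by linarith
    positivity
  have h9 : c * K₀ ^ 2 * (K - 1) ≤ (β - 1) * (K - 1) :=
    mul_le_mul_of_nonneg_right h4 (by linarith)
  nlinarith [h7, h8, h9]

end Stmt10Aux

theorem stmt_10 (f : ℂ → ℂ) (hf : TranscendentalEntire f) :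
    (∃ r₀ > (1:ℝ), ∃ c > (0:ℝ), ∀ k > (1:ℝ), ∀ r ≥ r₀,
        (maxMod f r) ^ (k * k ^ c) ≤ maxMod f (r ^ k)) ↔
    (∃ r₁ > (1:ℝ), ∃ k > (1:ℝ), ∃ d > (1:ℝ), ∀ r ≥ r₁,
        (maxMod f r) ^ (k * d) ≤ maxMod f (r ^ k)) := by
  constructor
  · rintro ⟨r₀, hr₀, c, hc, h⟩
    refine ⟨r₀, hr₀, 2, one_lt_two, (2:ℝ) ^ c, ?_, fun r hr => h 2 one_lt_two r hr⟩
    exact (Real.one_lt_rpow_iff_of_pos two_pos).mpr (Or.inl ⟨one_lt_two, hc⟩)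
  · rintro ⟨r₁, hr₁, k, hk, d, hd, H⟩
    obtain ⟨r₂, hr₂1, hr₂⟩ := Stmt10Aux.exists_maxMod_gt_one hf
    have hk0 : (0:ℝ) < k := by linarith
    have hd0 : (0:ℝ) < d := by linarith
    have hlogk : 0 < Real.log k := Real.log_pos hk
    have hlogd : 0 < Real.log d := Real.log_pos hd
    set n₀ : ℕ := ⌈2 * Real.log k / Real.log d⌉₊ + 1 with hn₀def
    have hn₀1 : 1 ≤ n₀ := Nat.le_add_left 1 _
    have hn₀d : 2 * Real.log k ≤ (n₀ : ℝ) * Real.log d := by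
      have h1 : 2 * Real.log k / Real.log d ≤ (n₀ : ℝ) := by
        calc 2 * Real.log k / Real.log d
            ≤ (⌈2 * Real.log k / Real.log d⌉₊ : ℝ) := Nat.le_ceil _
          _ ≤ (n₀ : ℝ) := by rw [hn₀def]; push_cast; linarith
      calc 2 * Real.log k = (2 * Real.log k / Real.log d) * Real.log d := by field_simp
        _ ≤ (n₀:ℝ) * Real.log d := mul_le_mul_of_nonneg_right h1 hlogd.le
    set K₀ : ℝ := k ^ n₀ with hK₀def
    have hK₀ : 1 < K₀ := one_lt_pow₀ hk (by omega)
    set β : ℝ := (k - 1/d) / (k - 1) with hβdef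
    have hβ1 : 1 < β := by
      rw [hβdef, lt_div_iff₀ (by linarith : (0:ℝ) < k - 1)]
      have h1d : 1/d < 1 := by rw [div_lt_one hd0]; exact hd
      linarith
    set c : ℝ := min ((β - 1)/K₀^2) (min (Real.log d / (4 * Real.log k)) 1) with hcdef
    have hc0 : 0 < c := by
      apply lt_min
      · exact div_pos (by linarith) (by positivity)
      · exact lt_min (div_pos hlogd (by positivity)) one_pos
    have hc1 : c ≤ 1 := le_trans (min_le_right _ _) (min_le_right _ _)
    have hcβ : c ≤ (β - 1)/K₀^2 := min_le_left _ _
    have hcd : c ≤ Real.log d / (4 * Real.log k) :=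
      le_trans (min_le_right _ _) (min_le_left _ _)
    set s : ℝ := max r₁ (max r₂ 2) with hsdef
    have hs2 : (2:ℝ) ≤ s := le_trans (le_max_right _ _) (le_max_right _ _)
    have hs1 : (1:ℝ) < s := by linarith
    have hs0 : (0:ℝ) < s := by linarith
    have hsr₁ : r₁ ≤ s := le_max_left _ _
    have hsr₂ : r₂ ≤ s := le_trans (le_max_left _ _) (le_max_right _ _)
    set R₀ : ℝ := s ^ (k : ℝ) with hR₀def
    have hR₀s : s ≤ R₀ := by
      calc s = s ^ (1:ℝ) := (Real.rpow_one s).symm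
        _ ≤ s ^ (k:ℝ) := Real.rpow_le_rpow_of_exponent_le hs1.le hk.le
    have hR₀1 : 1 < R₀ := lt_of_lt_of_le hs1 hR₀s
    have Hlog : ∀ ρ : ℝ, s ≤ ρ →
        (k*d) * Real.log (maxMod f ρ) ≤ Real.log (maxMod f (ρ ^ (k:ℝ))) := by
      intro ρ hρ
      have hMρ : 1 < maxMod f ρ := hr₂ ρ (le_trans hsr₂ hρ)
      have hMρ0 : (0:ℝ) < maxMod f ρ := by linarith
      have h1 := H ρ (le_trans hsr₁ hρ)
      have h2 : Real.log ((maxMod f ρ) ^ (k*d)) ≤ Real.log (maxMod f (ρ ^ (k:ℝ))) := by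
        rw [Real.log_le_log_iff (Real.rpow_pos_of_pos hMρ0 _)
          (lt_of_lt_of_le (Real.rpow_pos_of_pos hMρ0 _) h1)]
        exact h1
      rwa [Real.log_rpow hMρ0] at h2
    refine ⟨R₀, hR₀1, c, hc0, ?_⟩
    intro K hK r hr
    have hK0 : (0:ℝ) < K := by linarith
    have hrs : s ≤ r := le_trans hR₀s hr
    have hr1 : (1:ℝ) < r := lt_of_lt_of_le hs1 hrs
    have hr0 : (0:ℝ) < r := by linarith
    have hMr : 1 < maxMod f r := hr₂ r (le_trans hsr₂ hrs)
    have hMr0 : (0:ℝ) < maxMod f r := by linarith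
    set a : ℝ := Real.log (maxMod f r) with hadef
    have ha0 : 0 < a := Real.log_pos hMr
    have hrK : r ≤ r ^ K := by
      calc r = r ^ (1:ℝ) := (Real.rpow_one r).symm
        _ ≤ r ^ K := Real.rpow_le_rpow_of_exponent_le hr1.le hK.le
    have hMrK : 1 < maxMod f (r ^ K) :=
      lt_of_lt_of_le hMr (Stmt10Aux.maxMod_mono hf.1 hr0.le hrK)
    have hMrK0 : (0:ℝ) < maxMod f (r ^ K) := by linarith
    set b₃ : ℝ := Real.log (maxMod f (r ^ K)) with hb₃def
    suffices hlog : (K * K ^ c) * a ≤ b₃ by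
      rw [Real.rpow_def_of_pos hMr0]
      calc Real.exp (Real.log (maxMod f r) * (K * K ^ c))
          ≤ Real.exp b₃ := by rw [Real.exp_le_exp, mul_comm]; exact hlog
        _ = maxMod f (r ^ K) := Real.exp_log hMrK0
    have hkinv : k⁻¹ < 1 := inv_lt_one_of_one_lt₀ hk
    rcases le_or_gt K K₀ with hKK₀ | hKK₀
    · -- small K case, via three circles
      set ρ₁ : ℝ := r ^ (k⁻¹ : ℝ) with hρ₁def
      have hρ₁pos : 0 < ρ₁ := Real.rpow_pos_of_pos hr0 _
      have hρ₁s : s ≤ ρ₁ := by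
        have h1 : s = R₀ ^ (k⁻¹ : ℝ) := by
          rw [hR₀def, ← Real.rpow_mul hs0.le, mul_inv_cancel₀ hk0.ne', Real.rpow_one]
        rw [h1, hρ₁def]
        exact Real.rpow_le_rpow (by positivity) hr (by positivity)
      have hρ₁r : ρ₁ < r := by
        have h1 : ρ₁ < r ^ (1:ℝ) := Real.rpow_lt_rpow_of_exponent_lt hr1 hkinv
        rwa [Real.rpow_one] at h1
      have hrrK : r < r ^ K := by
        have h1 : r ^ (1:ℝ) < r ^ K := Real.rpow_lt_rpow_of_exponent_lt hr1 hK
        rwa [Real.rpow_one] at h1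
      have hMρ₁ : 1 < maxMod f ρ₁ := hr₂ ρ₁ (le_trans hsr₂ hρ₁s)
      have hMρ₁0 : (0:ℝ) < maxMod f ρ₁ := by linarith
      set b₁ : ℝ := Real.log (maxMod f ρ₁) with hb₁def
      have hb₁a : (k*d) * b₁ ≤ a := by
        have h1 := Hlog ρ₁ hρ₁s
        have h2 : ρ₁ ^ (k:ℝ) = r := by
          rw [hρ₁def, ← Real.rpow_mul hr0.le, inv_mul_cancel₀ hk0.ne', Real.rpow_one]
        rwa [h2] at h1
      have hTC := Stmt10Aux.maxMod_three_circles hf.1 hρ₁pos hρ₁r hrrK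
      set lr : ℝ := Real.log r with hlrdef
      have hlr0 : 0 < lr := Real.log_pos hr1
      have hlogρ₁ : Real.log ρ₁ = k⁻¹ * lr := Real.log_rpow hr0 _
      have hlogrK : Real.log (r ^ K) = K * lr := Real.log_rpow hr0 _
      set x : ℝ := (k - 1) / (K * k - 1) with hxdef
      have hKk1 : (0:ℝ) < K * k - 1 := by
        have h := one_lt_mul hK.le hk
        linarith
      have hx0 : 0 < x := div_pos (by linarith) hKk1
      have hx1 : x ≤ 1 := by
        rw [div_le_one hKk1]
        have h : k * 1 ≤ k * K := mul_le_mul_of_nonneg_left hK.le hk0.le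
        have e : k * K = K * k := mul_comm _ _
        linarith
      have hden : (0:ℝ) < K * lr - k⁻¹ * lr := by
        have h : (0:ℝ) < (K - k⁻¹) * lr := mul_pos (by linarith) hlr0
        have e : (K - k⁻¹) * lr = K * lr - k⁻¹ * lr := by ring
        linarith
      have hxeq : (Real.log r - Real.log ρ₁) / (Real.log (r ^ K) - Real.log ρ₁) = x := by
        rw [hlogρ₁, hlogrK, ← hlrdef, hxdef, div_eq_div_iff (ne_of_gt hden) (ne_of_gt hKk1)]
        field_simp
      rw [hxeq] at hTC
      have h2 : Real.log ((maxMod f ρ₁) ^ (1-x) * (maxMod f (r^K)) ^ x)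
          = (1-x)*b₁ + x*b₃ := by
        rw [Real.log_mul (ne_of_gt (Real.rpow_pos_of_pos hMρ₁0 _))
          (ne_of_gt (Real.rpow_pos_of_pos hMrK0 _)),
          Real.log_rpow hMρ₁0, Real.log_rpow hMrK0]
      have h3 : a ≤ (1-x)*b₁ + x*b₃ := by
        rw [hadef, ← h2]
        exact (Real.log_le_log_iff hMr0 (by positivity)).mpr hTC
      have hb₁a' : b₁ ≤ a / (k*d) := by
        rw [le_div_iff₀ (by positivity), mul_comm]
        exact hb₁a
      have h4 : a ≤ (1-x) * (a/(k*d)) + x * b₃ := by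
        have h5 := mul_le_mul_of_nonneg_left hb₁a' (by linarith : (0:ℝ) ≤ 1 - x)
        linarith
      have hkm1ne : (k - 1) ≠ 0 := ne_of_gt (by linarith)
      have hKk1ne : (K*k - 1) ≠ 0 := ne_of_gt hKk1
      have hid : (1 + β*(K-1)) * x = 1 - (1-x)/(k*d) := by
        have hx' : x * (K*k-1) = k - 1 := by rw [hxdef]; exact div_mul_cancel₀ _ hKk1ne
        have hd0' : d ≠ 0 := by positivity
        have hk0' : k ≠ 0 := by positivity
        rw [hβdef]
        field_simp
        linear_combination (k*d-1) * hx'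
      have h6 : (1 - (1-x)/(k*d)) * a ≤ b₃ * x := by
        have e1 : (1 - (1-x)/(k*d)) * a = a - (1-x)*(a/(k*d)) := by ring
        rw [e1]
        linarith
      have h8 : ((1 + β*(K-1)) * a) * x ≤ b₃ * x := by
        calc ((1 + β*(K-1)) * a) * x = ((1 + β*(K-1)) * x) * a := by ring
          _ = (1 - (1-x)/(k*d)) * a := by rw [hid]
          _ ≤ b₃ * x := h6
      have h9 : (1 + β*(K-1)) * a ≤ b₃ := le_of_mul_le_mul_right h8 hx0
      have h10 : K * K^c ≤ 1 + β*(K-1) := Stmt10Aux.small_exp_bound hK hKK₀ hβ1 hc0 hc1 hcβ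
      calc (K * K^c) * a ≤ (1 + β*(K-1)) * a := mul_le_mul_of_nonneg_right h10 ha0.le
        _ ≤ b₃ := h9
    · -- large K case
      set n : ℕ := ⌊Real.log K / Real.log k⌋₊ with hndef
      have hlogK0 : 0 < Real.log K := Real.log_pos hK
      have hlogK₀ : Real.log K₀ < Real.log K := Real.log_lt_log (by linarith) hKK₀
      have hlogK₀eq : Real.log K₀ = (n₀:ℝ) * Real.log k := by
        rw [hK₀def, Real.log_pow]
      have hn₀n : n₀ ≤ n := by
        rw [hndef, Nat.le_floor_iff (by positivity), le_div_iff₀ hlogk]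
        rw [hlogK₀eq] at hlogK₀
        linarith
      have hn1 : 1 ≤ n := le_trans hn₀1 hn₀n
      have hnn : (1:ℝ) ≤ (n:ℝ) := by exact_mod_cast hn1
      have hfl : (n:ℝ) ≤ Real.log K / Real.log k := Nat.floor_le (by positivity)
      have hfl2 : Real.log K / Real.log k < (n:ℝ) + 1 := Nat.lt_floor_add_one _
      have hnlogk : (n:ℝ) * Real.log k ≤ Real.log K := (le_div_iff₀ hlogk).mp hfl
      have hlogKn1 : Real.log K < ((n:ℝ)+1) * Real.log k := by
        have h1 := (div_lt_iff₀ hlogk).mp hfl2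
        linarith
      have hkn : (k:ℝ)^n ≤ K := by
        rw [← Real.log_le_log_iff (pow_pos hk0 n) hK0, Real.log_pow]
        exact hnlogk
      have hclogK : c * Real.log K ≤ (n:ℝ) * Real.log d / 2 := by
        have h1 : c * Real.log K ≤ (Real.log d / (4*Real.log k)) * (((n:ℝ)+1) * Real.log k) := by
          apply mul_le_mul hcd (by linarith) hlogK0.le (by positivity)
        have h2 : (Real.log d / (4*Real.log k)) * (((n:ℝ)+1) * Real.log k)
            = ((n:ℝ)+1) * Real.log d / 4 := by
          field_simp
        rw [h2] at h1
        have h3 : ((n:ℝ)+1) * Real.log d ≤ (2*(n:ℝ)) * Real.log d :=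
          mul_le_mul_of_nonneg_right (by linarith) hlogd.le
        linarith
      have hlogksmall : Real.log k ≤ (n:ℝ) * Real.log d / 2 := by
        have h1 : (n₀:ℝ) ≤ (n:ℝ) := by exact_mod_cast hn₀n
        have h2 : (n₀:ℝ) * Real.log d ≤ (n:ℝ) * Real.log d :=
          mul_le_mul_of_nonneg_right h1 hlogd.le
        linarith
      have hexp : (1 + c) * Real.log K ≤ (n:ℝ) * (Real.log k + Real.log d) := by
        have e : (1+c)*Real.log K = Real.log K + c * Real.log K := by ring
        have e2 : ((n:ℝ)+1) * Real.log k = (n:ℝ) * Real.log k + Real.log k := by ring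
        have e3 : (n:ℝ) * (Real.log k + Real.log d)
            = (n:ℝ) * Real.log k + (n:ℝ) * Real.log d := by ring
        linarith
      have hKcn : K * K^c ≤ (k*d)^n := by
        have h1 : Real.log (K * K^c) = (1+c) * Real.log K := by
          rw [Real.log_mul hK0.ne' (ne_of_gt (Real.rpow_pos_of_pos hK0 _)), Real.log_rpow hK0]
          ring
        have h2 : Real.log ((k*d)^n) = (n:ℝ) * (Real.log k + Real.log d) := by
          rw [Real.log_pow, Real.log_mul hk0.ne' hd0.ne']
        rw [← Real.log_le_log_iff (by positivity) (by positivity), h1, h2]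
        exact hexp
      have iter : ∀ m : ℕ, (k*d)^m * a ≤ Real.log (maxMod f (r ^ ((k:ℝ)^m))) := by
        intro m
        induction m with
        | zero => simp [Real.rpow_one, hadef]
        | succ m ih =>
          have hkm1 : (1:ℝ) ≤ (k:ℝ)^m := one_le_pow₀ hk.le
          have hρ : r ≤ r ^ ((k:ℝ)^m) := by
            calc r = r ^ (1:ℝ) := (Real.rpow_one r).symm
              _ ≤ _ := Real.rpow_le_rpow_of_exponent_le hr1.le hkm1
          have hρs : s ≤ r ^ ((k:ℝ)^m) := le_trans hrs hρ
          have h1 := Hlog _ hρs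
          have h2 : (r ^ ((k:ℝ)^m)) ^ (k:ℝ) = r ^ ((k:ℝ)^(m+1)) := by
            rw [pow_succ, Real.rpow_mul hr0.le]
          calc (k*d)^(m+1) * a = (k*d) * ((k*d)^m * a) := by ring
            _ ≤ (k*d) * Real.log (maxMod f (r ^ ((k:ℝ)^m))) :=
                mul_le_mul_of_nonneg_left ih (by positivity)
            _ ≤ Real.log (maxMod f ((r ^ ((k:ℝ)^m)) ^ (k:ℝ))) := h1
            _ = Real.log (maxMod f (r ^ ((k:ℝ)^(m+1)))) := by rw [h2]
      have hkn1 : (1:ℝ) ≤ (k:ℝ)^n := one_le_pow₀ hk.le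
      have hρn : r ≤ r ^ ((k:ℝ)^n) := by
        calc r = r ^ (1:ℝ) := (Real.rpow_one r).symm
          _ ≤ _ := Real.rpow_le_rpow_of_exponent_le hr1.le hkn1
      have hMn : 1 < maxMod f (r ^ ((k:ℝ)^n)) :=
        lt_of_lt_of_le hMr (Stmt10Aux.maxMod_mono hf.1 hr0.le hρn)
      have h3 : r ^ ((k:ℝ)^n) ≤ r ^ K :=
        Real.rpow_le_rpow_of_exponent_le hr1.le hkn
      have h4 : Real.log (maxMod f (r ^ ((k:ℝ)^n))) ≤ b₃ := by
        rw [hb₃def, Real.log_le_log_iff (by linarith) hMrK0]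
        exact Stmt10Aux.maxMod_mono hf.1 (Real.rpow_pos_of_pos hr0 _).le h3
      calc (K * K^c) * a ≤ (k*d)^n * a := mul_le_mul_of_nonneg_right hKcn ha0.le
        _ ≤ Real.log (maxMod f (r ^ ((k:ℝ)^n))) := iter n
        _ ≤ b₃ := h4
end

section
/- There exists a transcendental entire function f which is weakly regular but not log-regular, i.e. for all r_1 > 1, k > 1 and d > 1 there exists r ≥ r_1 with M(r^k) < M(r)^{kd}. -/
open Set Filter

open Real

namespace Stmt17

def nn (j : ℕ) : ℕ := 2 ^ (4 ^ j)
def TT (j : ℕ) : ℕ := 2 ^ (j ^ 2 + 3)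
def bb : ℕ → ℕ
  | 0 => 0
  | j + 1 => bb j + (nn (j + 1) - nn j) * TT j

noncomputable def aa (j : ℕ) : ℝ := Real.exp (-(bb j : ℝ))
noncomputable def yy (j : ℕ) (t : ℝ) : ℝ := (nn j : ℝ) * t - (bb j : ℝ)

lemma nn_lt (j : ℕ) : nn j < nn (j + 1) := by
  apply Nat.pow_lt_pow_right one_lt_two
  exact Nat.pow_lt_pow_right (by norm_num) (Nat.lt_succ_self j)

lemma nn_mono : StrictMono nn := strictMono_nat_of_lt_succ nn_lt

lemma nn_pos (j : ℕ) : 0 < nn j := Nat.two_pow_pos _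

lemma nn_zero : nn 0 = 2 := by norm_num [nn]

lemma nn_ge_two (j : ℕ) : 2 ≤ nn j := by
  have := nn_mono.monotone (Nat.zero_le j); rwa [nn_zero] at this

lemma nn_succ_eq (j : ℕ) : nn (j + 1) = nn j ^ 4 := by
  unfold nn; rw [← pow_mul, ← pow_succ]

lemma two_nn_le (j : ℕ) : 2 * nn j ≤ nn (j + 1) := by
  unfold nn
  calc 2 * 2 ^ 4 ^ j = 2 ^ (4 ^ j + 1) := by ring
  _ ≤ 2 ^ 4 ^ (j+1) := Nat.pow_le_pow_right (by norm_num) (by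
      have : 1 ≤ 4 ^ j := Nat.one_le_two_pow.trans (Nat.pow_le_pow_left (by norm_num) j)
      calc 4 ^ j + 1 ≤ 4 ^ j + 4 ^ j := by omega
      _ ≤ 4 ^ (j + 1) := by rw [pow_succ]; omega)

lemma lt_nn (j : ℕ) : j < nn j := by
  calc j < 2 ^ j := Nat.lt_two_pow_self
  _ ≤ nn j := Nat.pow_le_pow_right (by norm_num) (by
      calc j ≤ 2 ^ j := (Nat.lt_two_pow_self (n := j)).le
      _ ≤ 4 ^ j := Nat.pow_le_pow_left (by norm_num) j)

lemma add_five_le_nn (j : ℕ) : j + 5 ≤ nn (j + 1) := by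
  have h1 : j + 1 ≤ 2 ^ j := Nat.lt_two_pow_self
  have h1' : j + 1 ≤ 4 ^ j := h1.trans (Nat.pow_le_pow_left (by norm_num) j)
  have h2 : j + 3 ≤ 4 ^ (j + 1) := by rw [pow_succ]; omega
  calc j + 5 ≤ 8 * (j + 1) := by omega
  _ ≤ 8 * 2 ^ j := by omega
  _ = 2 ^ (j + 3) := by rw [pow_add]; ring
  _ ≤ nn (j + 1) := Nat.pow_le_pow_right (by norm_num) h2

lemma TT_lt (j : ℕ) : TT j < TT (j + 1) := by
  apply Nat.pow_lt_pow_right one_lt_two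
  have : (j+1)^2 = j^2 + 2*j + 1 := by ring
  omega

lemma TT_mono : StrictMono TT := strictMono_nat_of_lt_succ TT_lt

lemma TT_ge_eight (j : ℕ) : 8 ≤ TT j := by
  calc 8 = 2 ^ 3 := by norm_num
  _ ≤ TT j := Nat.pow_le_pow_right (by norm_num) (by omega)

lemma TT_succ_eq (j : ℕ) : TT (j + 1) = TT j * 2 ^ (2 * j + 1) := by
  unfold TT; rw [← pow_add]; ring_nf

lemma TT_sq (j : ℕ) : 2 * TT (j + 1) ≤ TT j ^ 2 := by
  unfold TT
  rw [← pow_mul]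
  calc 2 * 2 ^ ((j+1)^2 + 3) = 2 ^ ((j+1)^2 + 4) := by ring
  _ ≤ 2 ^ ((j ^ 2 + 3) * 2) := Nat.pow_le_pow_right (by norm_num) (by nlinarith)

lemma pow_le_TT (j : ℕ) : 2 ^ j ≤ TT j := Nat.pow_le_pow_right (by norm_num) (by nlinarith)

lemma bb_succ_real (j : ℕ) : (bb (j+1) : ℝ) = bb j + ((nn (j+1) : ℝ) - nn j) * TT j := by
  have h : nn j ≤ nn (j + 1) := (nn_lt j).le
  show ((bb j + (nn (j + 1) - nn j) * TT j : ℕ) : ℝ) = _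
  push_cast [Nat.cast_sub h]
  ring

lemma bb_nonneg (j : ℕ) : (0:ℝ) ≤ (bb j : ℝ) := Nat.cast_nonneg _

lemma bb_le_real (j : ℕ) : (bb (j+1) : ℝ) ≤ (nn (j+1) : ℝ) * TT j := by
  induction j with
  | zero =>
      rw [bb_succ_real]
      have : (bb 0 : ℝ) = 0 := by norm_num [bb]
      rw [this]
      have h1 : (0:ℝ) ≤ nn 0 := Nat.cast_nonneg _
      have h2 : (0:ℝ) ≤ TT 0 := Nat.cast_nonneg _
      nlinarith
  | succ j ih =>
      rw [bb_succ_real]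
      have h1 : (TT j : ℝ) ≤ TT (j+1) := by exact_mod_cast (TT_lt j).le
      have h2 : (nn (j+1) : ℝ) ≤ nn (j+2) := by exact_mod_cast (nn_lt (j+1)).le
      have h3 : (0:ℝ) ≤ TT (j+1) := Nat.cast_nonneg _
      have h4 : (0:ℝ) ≤ nn (j+1) := Nat.cast_nonneg _
      have h5 : (0:ℝ) ≤ TT j := Nat.cast_nonneg _
      nlinarith

lemma bb_ge_real (j : ℕ) : ((nn (j+1) : ℝ) / 2) * TT j ≤ (bb (j+1) : ℝ) := by
  rw [bb_succ_real]
  have h1 : (2:ℝ) * nn j ≤ nn (j+1) := by exact_mod_cast two_nn_le j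
  have h2 : (0:ℝ) ≤ TT j := Nat.cast_nonneg _
  have h3 := bb_nonneg j
  nlinarith

lemma yy_succ_sub (j : ℕ) (t : ℝ) :
    yy (j+1) t - yy j t = ((nn (j+1) : ℝ) - nn j) * (t - TT j) := by
  unfold yy; rw [bb_succ_real]; ring

lemma yy_le_succ (j : ℕ) (t : ℝ) (h : (TT j : ℝ) ≤ t) : yy j t ≤ yy (j+1) t := by
  have hd := yy_succ_sub j t
  have h1 : (nn j : ℝ) ≤ nn (j+1) := by exact_mod_cast (nn_lt j).le
  nlinarith

lemma yy_up (i j : ℕ) (hij : i ≤ j) (t : ℝ) (h1 : ∀ m, m < j → (TT m : ℝ) ≤ t) :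
    yy i t ≤ yy j t := by
  induction j with
  | zero =>
      have : i = 0 := by omega
      subst this; exact le_refl _
  | succ j ih =>
      rcases Nat.lt_or_ge i (j+1) with h | h
      · have hi : i ≤ j := by omega
        calc yy i t ≤ yy j t := ih hi (fun m hm => h1 m (by omega))
        _ ≤ yy (j+1) t := yy_le_succ j t (h1 j (by omega))
      · have : i = j + 1 := by omega
        subst this; exact le_refl _

lemma yy_down (i j : ℕ) (hji : j ≤ i) (t : ℝ) (h : t ≤ (TT j : ℝ)) : yy i t ≤ yy j t := by
  induction i with
  | zero =>
      have : j = 0 := by omega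
      subst this; exact le_refl _
  | succ i ih =>
      rcases Nat.lt_or_ge j (i+1) with hlt | hge
      · have hji' : j ≤ i := by omega
        have hTm : t ≤ (TT i : ℝ) := h.trans (by exact_mod_cast (TT_mono.monotone hji'))
        have hd := yy_succ_sub i t
        have h1 : (nn i : ℝ) ≤ nn (i+1) := by exact_mod_cast (nn_lt i).le
        have : yy (i+1) t ≤ yy i t := by nlinarith
        exact this.trans (ih hji')
      · have : j = i + 1 := by omega
        subst this; exact le_refl _



noncomputable def gg (r : ℝ) : ℝ := ∑' j, aa j * r ^ nn j

lemma aa_pos (j : ℕ) : 0 < aa j := exp_pos _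

lemma term_eq (j : ℕ) (t : ℝ) : aa j * (Real.exp t) ^ nn j = Real.exp (yy j t) := by
  unfold aa yy
  rw [← Real.exp_nat_mul, ← Real.exp_add]
  ring_nf

lemma yy_neg {t : ℝ} (j : ℕ) (h : 2 * t + 2 ≤ (TT j : ℝ)) :
    yy (j+1) t ≤ -(nn (j+1) : ℝ) := by
  have hb := bb_ge_real j
  have hn : (0:ℝ) < nn (j+1) := by exact_mod_cast nn_pos (j+1)
  unfold yy
  nlinarith

lemma exists_TT_ge (x : ℝ) : ∃ J : ℕ, ∀ j, J ≤ j → x ≤ (TT j : ℝ) := by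
  obtain ⟨n, hn⟩ := pow_unbounded_of_one_lt x (one_lt_two (α := ℝ))
  refine ⟨n, fun j hj => ?_⟩
  have h1 : (2:ℝ) ^ n ≤ (TT j : ℝ) := by
    have : (2:ℕ) ^ n ≤ TT j := le_trans (Nat.pow_le_pow_right (by norm_num) hj) (pow_le_TT j)
    exact_mod_cast this
  exact (hn.le).trans h1

lemma summable_exp_yy (t : ℝ) : Summable fun j => Real.exp (yy j t) := by
  obtain ⟨J, hJ⟩ := exists_TT_ge (2 * t + 2)
  rw [← summable_nat_add_iff (J + 1)]
  have hgeo : Summable fun i : ℕ => (Real.exp (-1)) ^ i :=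
    summable_geometric_of_lt_one (exp_pos (-1)).le (exp_lt_one_iff.mpr (by norm_num))
  refine Summable.of_nonneg_of_le (fun i => (exp_pos _).le) (fun i => ?_) hgeo
  · have h1 : yy (i + (J + 1)) t ≤ -(nn (i + (J+1)) : ℝ) := by
      have he : i + (J + 1) = (i + J) + 1 := by ring
      rw [he]
      exact yy_neg (i + J) (hJ _ (by omega))
    have h2 : (i : ℝ) ≤ (nn (i + (J+1)) : ℝ) := by
      have : i ≤ nn (i + (J+1)) := le_trans (by omega) (lt_nn (i + (J+1))).le
      exact_mod_cast this
    calc Real.exp (yy (i + (J+1)) t) ≤ Real.exp (-(i:ℝ)) :=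
          exp_le_exp.mpr (h1.trans (by linarith))
    _ = (Real.exp (-1)) ^ i := by rw [← Real.exp_nat_mul]; ring_nf

lemma summable_term {r : ℝ} (hr : 0 ≤ r) : Summable fun j => aa j * r ^ nn j := by
  rcases eq_or_lt_of_le hr with h | h
  · apply summable_of_ne_finset_zero (s := ∅)
    intro j _
    rw [← h, zero_pow (nn_pos j).ne', mul_zero]
  · refine (summable_exp_yy (Real.log r)).congr fun j => ?_
    rw [← term_eq, Real.exp_log h]

lemma gg_nonneg {r : ℝ} (hr : 0 ≤ r) : 0 ≤ gg r :=
  tsum_nonneg fun j => mul_nonneg (aa_pos j).le (pow_nonneg hr _)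

lemma gg_exp (t : ℝ) : gg (Real.exp t) = ∑' j, Real.exp (yy j t) :=
  tsum_congr fun j => term_eq j t

lemma gg_lower (j : ℕ) (t : ℝ) : Real.exp (yy j t) ≤ gg (Real.exp t) := by
  rw [gg_exp]
  exact Summable.le_tsum (summable_exp_yy t) j (fun i _ => (exp_pos _).le)

lemma gg_lower_r {r : ℝ} (hr : 0 ≤ r) (j : ℕ) : aa j * r ^ nn j ≤ gg r :=
  Summable.le_tsum (summable_term hr) j (fun i _ => mul_nonneg (aa_pos i).le (pow_nonneg hr _))

lemma gg_pos_exp (t : ℝ) : 0 < gg (Real.exp t) :=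
  lt_of_lt_of_le (exp_pos _) (gg_lower 0 t)

lemma gg_mono {r s : ℝ} (hr : 0 ≤ r) (hrs : r ≤ s) : gg r ≤ gg s := by
  refine Summable.tsum_le_tsum (fun j => ?_) (summable_term hr) (summable_term (hr.trans hrs))
  exact mul_le_mul_of_nonneg_left (pow_le_pow_left₀ hr hrs _) (aa_pos j).le

lemma gg_ge_sq {r : ℝ} (hr : 0 ≤ r) : r ^ 2 ≤ gg r := by
  have h := gg_lower_r hr 0
  have ha : aa 0 = 1 := by norm_num [aa, bb]
  rwa [ha, nn_zero, one_mul] at h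

lemma yy_step_le {t : ℝ} {J m : ℕ} (hm : J + 1 ≤ m) (h : t ≤ (TT J : ℝ)) :
    yy (m+1) t ≤ yy m t - 1 := by
  have hd := yy_succ_sub m t
  have h1 : (nn m : ℝ) + 1 ≤ nn (m+1) := by exact_mod_cast nn_lt m
  have h2 : 2 * (TT J : ℝ) ≤ (TT m : ℝ) := by
    have ha : 2 * TT J ≤ TT (J + 1) := by
      rw [TT_succ_eq]
      have : 2 ≤ 2 ^ (2*J+1) := by
        calc 2 = 2^1 := by norm_num
        _ ≤ 2 ^ (2*J+1) := Nat.pow_le_pow_right (by norm_num) (by omega)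
      nlinarith [Nat.two_pow_pos (J^2+3)]
    have h3 : TT (J+1) ≤ TT m := TT_mono.monotone hm
    exact_mod_cast le_trans ha h3
  have h4 : (8:ℝ) ≤ TT J := by exact_mod_cast TT_ge_eight J
  nlinarith

lemma yy_tail_le {t : ℝ} {J : ℕ} (h : t ≤ (TT J : ℝ)) (i : ℕ) :
    yy (i + (J + 2)) t ≤ yy J t - (i + 1) := by
  induction i with
  | zero =>
      have h1 : yy (J+2) t ≤ yy (J+1) t - 1 := yy_step_le (le_refl _) h
      have h2 : yy (J+1) t ≤ yy J t := yy_down (J+1) J (by omega) t h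
      simp only [Nat.zero_add]
      push_cast
      linarith
  | succ i ih =>
      have h1 : yy (i + (J+2) + 1) t ≤ yy (i + (J+2)) t - 1 := yy_step_le (by omega) h
      have he : i + 1 + (J + 2) = i + (J+2) + 1 := by ring
      rw [he]
      push_cast
      push_cast at ih
      linarith

lemma g_upper (J : ℕ) (t : ℝ) (h1 : ∀ m, m < J → (TT m : ℝ) ≤ t) (h2 : t ≤ (TT J : ℝ)) :
    gg (Real.exp t) ≤ (J + 4 : ℝ) * Real.exp (yy J t) := by
  rw [gg_exp, ← (summable_exp_yy t).sum_add_tsum_nat_add (J+2)]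
  have hfin : ∑ i ∈ Finset.range (J+2), Real.exp (yy i t) ≤ (J+2 : ℝ) * Real.exp (yy J t) := by
    have hb : ∀ i ∈ Finset.range (J+2), Real.exp (yy i t) ≤ Real.exp (yy J t) := by
      intro i hi
      rw [Finset.mem_range] at hi
      rcases Nat.lt_or_ge i (J+1) with h | h
      · exact exp_le_exp.mpr (yy_up i J (by omega) t h1)
      · have : i = J + 1 := by omega
        subst this
        exact exp_le_exp.mpr (yy_down (J+1) J (by omega) t h2)
    calc ∑ i ∈ Finset.range (J+2), Real.exp (yy i t)
        ≤ ∑ _i ∈ Finset.range (J+2), Real.exp (yy J t) := Finset.sum_le_sum hb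
    _ = (J+2 : ℝ) * Real.exp (yy J t) := by
        rw [Finset.sum_const, Finset.card_range, nsmul_eq_mul]; push_cast; ring
  have hexpm1 : Real.exp (-1) ≤ 2⁻¹ := by
    have h2 : (2:ℝ) ≤ Real.exp 1 := by
      have := Real.add_one_le_exp (1:ℝ)
      linarith
    rw [Real.exp_neg]
    exact inv_anti₀ (by norm_num) h2
  have hgeo : Summable (fun i : ℕ => Real.exp (yy J t) * (2:ℝ)⁻¹ ^ i) :=
    (summable_geometric_of_lt_one (by norm_num) (by norm_num)).mul_left _
  have htail : ∑' i, Real.exp (yy (i + (J + 2)) t) ≤ 2 * Real.exp (yy J t) := by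
    have hsum1 : Summable fun i => Real.exp (yy (i + (J+2)) t) :=
      (summable_nat_add_iff (f := fun j => Real.exp (yy j t)) (J+2)).mpr (summable_exp_yy t)
    have hle : ∀ i : ℕ, Real.exp (yy (i + (J+2)) t) ≤ Real.exp (yy J t) * (2:ℝ)⁻¹ ^ i := by
      intro i
      have hy := yy_tail_le h2 i
      calc Real.exp (yy (i + (J+2)) t) ≤ Real.exp (yy J t - (i+1)) := exp_le_exp.mpr hy
      _ = Real.exp (yy J t) * Real.exp (-((i:ℝ)+1)) := by
          rw [← Real.exp_add]; ring_nf
      _ ≤ Real.exp (yy J t) * (2:ℝ)⁻¹ ^ i := by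
          have hA : Real.exp (-((i:ℝ)+1)) ≤ (2:ℝ)⁻¹ ^ i := by
            calc Real.exp (-((i:ℝ)+1)) ≤ Real.exp (-(i:ℝ)) := by
                  apply exp_le_exp.mpr; linarith
            _ = Real.exp (-1) ^ i := by rw [← Real.exp_nat_mul]; ring_nf
            _ ≤ (2:ℝ)⁻¹ ^ i := pow_le_pow_left₀ (exp_pos _).le hexpm1 i
          exact mul_le_mul_of_nonneg_left hA (exp_pos _).le
    calc ∑' i, Real.exp (yy (i + (J+2)) t)
        ≤ ∑' i, Real.exp (yy J t) * (2:ℝ)⁻¹ ^ i := Summable.tsum_le_tsum hle hsum1 hgeo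
    _ = Real.exp (yy J t) * (1 - 2⁻¹)⁻¹ := by
        rw [tsum_mul_left, tsum_geometric_of_lt_one (by norm_num) (by norm_num)]
    _ = 2 * Real.exp (yy J t) := by norm_num; ring
  linarith [exp_pos (yy J t)]

lemma exists_seg {x : ℝ} (J₀ : ℕ) (hx : (TT J₀ : ℝ) ≤ x) :
    ∃ j, J₀ ≤ j ∧ (TT j : ℝ) ≤ x ∧ x < TT (j+1) := by
  have hex : ∃ m, x < (TT m : ℝ) := by
    obtain ⟨n, hn⟩ := pow_unbounded_of_one_lt x (one_lt_two (α := ℝ))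
    refine ⟨n, hn.trans_le ?_⟩
    have : (2:ℕ) ^ n ≤ TT n := pow_le_TT n
    exact_mod_cast this
  classical
  have h0 : Nat.find hex ≠ 0 := by
    intro h
    have := Nat.find_spec hex
    rw [h] at this
    have hT0 : (TT 0 : ℝ) ≤ TT J₀ := by exact_mod_cast TT_mono.monotone (Nat.zero_le J₀)
    linarith
  obtain ⟨j, hj⟩ : ∃ j, Nat.find hex = j + 1 := ⟨Nat.find hex - 1, by omega⟩
  have hspec : x < (TT (j+1) : ℝ) := by rw [← hj]; exact Nat.find_spec hex
  have hmin : ¬ x < (TT j : ℝ) := Nat.find_min hex (by omega)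
  refine ⟨j, ?_, not_lt.mp hmin, hspec⟩
  by_contra hc
  push_neg at hc
  have : (TT (j+1) : ℝ) ≤ TT J₀ := by exact_mod_cast TT_mono.monotone (by omega : j + 1 ≤ J₀)
  linarith

lemma key_eps {ε : ℝ} (hε : 0 < ε) :
    ∃ J : ℕ, ∀ x : ℝ, (TT J : ℝ) ≤ x →
      (Real.log (gg (Real.exp x))) ^ 2 ≤ ε * Real.log (gg (Real.exp (x ^ 2))) := by
  obtain ⟨J, hJ⟩ := pow_unbounded_of_one_lt (8 / ε) (one_lt_two (α := ℝ))
  refine ⟨J, fun x hx => ?_⟩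
  obtain ⟨j, hjJ, hj1, hj2⟩ := exists_seg J hx
  -- basic positivity facts
  have hT8 : (8:ℝ) ≤ TT j := by exact_mod_cast TT_ge_eight j
  have hx8 : (8:ℝ) ≤ x := hT8.trans hj1
  set n : ℝ := (nn (j+1) : ℝ) with hn_def
  have hn_pos : (0:ℝ) < n := by rw [hn_def]; exact_mod_cast nn_pos (j+1)
  have hn2 : (2:ℝ) ≤ n := by rw [hn_def]; exact_mod_cast nn_ge_two (j+1)
  -- upper bound for log gg (exp x)
  have hup : Real.log (gg (Real.exp x)) ≤ 2 * n * x := by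
    have hgu := g_upper (j+1) x (fun m hm => by
      have : (TT m : ℝ) ≤ TT j := by exact_mod_cast TT_mono.monotone (by omega : m ≤ j)
      linarith) hj2.le
    push_cast at hgu
    have hlog : Real.log (gg (Real.exp x)) ≤ Real.log (((j:ℝ)+5) * Real.exp (yy (j+1) x)) := by
      apply Real.log_le_log (gg_pos_exp x)
      calc gg (Real.exp x) ≤ ((j:ℝ) + 1 + 4) * Real.exp (yy (j+1) x) := hgu
      _ = ((j:ℝ)+5) * Real.exp (yy (j+1) x) := by ring
    rw [Real.log_mul (by positivity) (exp_pos _).ne', Real.log_exp] at hlog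
    have h5 : Real.log ((j:ℝ)+5) ≤ n := by
      calc Real.log ((j:ℝ)+5) ≤ (j:ℝ)+5 := (Real.log_le_self (by positivity))
      _ ≤ n := by rw [hn_def]; exact_mod_cast add_five_le_nn j
    have hyy : yy (j+1) x ≤ n * x := by
      unfold yy
      have := bb_nonneg (j+1)
      rw [← hn_def]
      linarith
    have hnx : n ≤ n * x := le_mul_of_one_le_right hn_pos.le (by linarith)
    linarith
  have hL0 : 0 ≤ Real.log (gg (Real.exp x)) := by
    apply Real.log_nonneg
    calc (1:ℝ) ≤ Real.exp (yy 0 x) := by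
          apply Real.one_le_exp
          unfold yy
          rw [nn_zero]
          norm_num [bb]
          linarith
    _ ≤ gg (Real.exp x) := gg_lower 0 x
  -- lower bound for log gg (exp (x^2))
  set N : ℝ := (nn (j+2) : ℝ) with hN_def
  have hN_pos : (0:ℝ) < N := by rw [hN_def]; exact_mod_cast nn_pos (j+2)
  have hlow : N / 2 * x ^ 2 ≤ Real.log (gg (Real.exp (x ^ 2))) := by
    have h1 : yy (j+2) (x ^ 2) ≤ Real.log (gg (Real.exp (x ^ 2))) := by
      rw [← Real.log_exp (yy (j+2) (x^2))]
      exact Real.log_le_log (exp_pos _) (gg_lower (j+2) (x^2))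
    have h2 : (TT (j+1) : ℝ) ≤ x ^ 2 / 2 := by
      have hsq : 2 * (TT (j+1) : ℝ) ≤ (TT j : ℝ) ^ 2 := by
        have := TT_sq j
        exact_mod_cast this
      have hTx : (TT j : ℝ) ^ 2 ≤ x ^ 2 := by
        apply pow_le_pow_left₀ (by positivity) hj1
      linarith
    have h3 : (bb (j+2) : ℝ) ≤ N * (x ^ 2 / 2) := by
      calc (bb (j+2) : ℝ) ≤ N * TT (j+1) := bb_le_real (j+1)
      _ ≤ N * (x ^ 2 / 2) := mul_le_mul_of_nonneg_left h2 hN_pos.le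
    have h4 : N / 2 * x ^ 2 ≤ yy (j+2) (x ^ 2) := by
      unfold yy
      rw [← hN_def]
      linarith
    linarith
  -- combine
  have hcomb : 8 * n ^ 2 ≤ ε * N := by
    have hNn : N = n ^ 4 := by
      rw [hN_def, hn_def]
      exact_mod_cast nn_succ_eq (j+1)
    have h8 : 8 / ε ≤ n ^ 2 := by
      have h2j : (2:ℝ) ^ J ≤ n := by
        have : (2:ℕ) ^ J ≤ nn (j+1) := by
          calc (2:ℕ) ^ J ≤ 2 ^ (j+1) := Nat.pow_le_pow_right (by norm_num) (by omega)
          _ ≤ 2 ^ (4 ^ (j+1)) := Nat.pow_le_pow_right (by norm_num) (by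
              calc j + 1 ≤ 2 ^ (j+1) := (Nat.lt_two_pow_self (n := j+1)).le
              _ ≤ 4 ^ (j+1) := Nat.pow_le_pow_left (by norm_num) (j+1))
        rw [hn_def]
        exact_mod_cast this
      have hJ' : 8 / ε ≤ (2:ℝ) ^ J := hJ.le
      calc (8:ℝ) / ε ≤ n := hJ'.trans h2j
      _ ≤ n ^ 2 := by nlinarith [hn2]
    have : 8 ≤ ε * n ^ 2 := by
      rw [div_le_iff₀ hε] at h8
      linarith
    rw [hNn]
    nlinarith
  have hx2 : (0:ℝ) ≤ x ^ 2 := sq_nonneg x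
  calc (Real.log (gg (Real.exp x))) ^ 2 ≤ (2 * n * x) ^ 2 := by
        apply pow_le_pow_left₀ hL0 hup
  _ = 4 * n ^ 2 * x ^ 2 := by ring
  _ ≤ ε * (N / 2 * x ^ 2) := by nlinarith
  _ ≤ ε * Real.log (gg (Real.exp (x ^ 2))) := mul_le_mul_of_nonneg_left hlow hε.le

noncomputable def cc (m : ℕ) : ℝ := Function.extend nn aa 0 m

lemma nn_inj : Function.Injective nn := nn_mono.injective

lemma cc_nn (j : ℕ) : cc (nn j) = aa j := nn_inj.extend_apply aa 0 j

lemma cc_eq_zero {m : ℕ} (h : m ∉ Set.range nn) : cc m = 0 := by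
  rw [cc, Function.extend_apply' _ _ _ (by simpa [Set.range] using h)]
  rfl

lemma cc_nonneg (m : ℕ) : 0 ≤ cc m := by
  by_cases h : m ∈ Set.range nn
  · obtain ⟨j, rfl⟩ := h
    rw [cc_nn]; exact (aa_pos j).le
  · rw [cc_eq_zero h]

noncomputable def pp : FormalMultilinearSeries ℂ ℂ ℂ :=
  FormalMultilinearSeries.ofScalars ℂ (fun m => (cc m : ℂ))

noncomputable def ff : ℂ → ℂ := pp.sum

lemma summable_cc {r : ℝ} (hr : 0 ≤ r) : Summable (fun m => cc m * r ^ m) := by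
  refine (nn_inj.summable_iff (fun m hm => ?_)).mp ?_
  · rw [cc_eq_zero hm, zero_mul]
  · refine (summable_term hr).congr fun j => ?_
    simp [Function.comp, cc_nn]

lemma tsum_cc_eq {M : Type*} [AddCommMonoid M] [TopologicalSpace M] [T2Space M]
    (G : ℕ → M) (hG : ∀ m, m ∉ Set.range nn → G m = 0) :
    ∑' j, G (nn j) = ∑' m, G m := by
  apply nn_inj.tsum_eq
  intro m hm
  by_contra hc
  exact hm (hG m hc)

lemma pp_norm (m : ℕ) : ‖pp m‖ = cc m := by
  rw [pp, FormalMultilinearSeries.ofScalars_norm]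
  simp [Complex.norm_real, abs_of_nonneg (cc_nonneg m)]

lemma pp_radius : pp.radius = ⊤ := by
  apply FormalMultilinearSeries.radius_eq_top_of_summable_norm
  intro r
  refine (summable_cc r.coe_nonneg).congr fun m => ?_
  rw [pp_norm]

lemma ff_diff : Differentiable ℂ ff := by
  intro z
  have h0 : (0:ENNReal) < pp.radius := by rw [pp_radius]; exact ENNReal.zero_lt_top
  have h := pp.hasFPowerSeriesOnBall h0
  have hz : z ∈ EMetric.ball (0:ℂ) pp.radius := by
    rw [pp_radius]
    exact EMetric.mem_ball.mpr (edist_lt_top z 0)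
  exact ((h.analyticAt_of_mem hz).differentiableAt).differentiableWithinAt.differentiableAt
    (Filter.univ_mem)

lemma ff_eq (z : ℂ) : ff z = ∑' m, (cc m : ℂ) * z ^ m := by
  rw [ff, FormalMultilinearSeries.sum]
  refine tsum_congr fun m => ?_
  rw [pp]
  rw [FormalMultilinearSeries.ofScalars_apply_eq]
  rw [smul_eq_mul]

lemma ff_tsum (z : ℂ) : ff z = ∑' j, (aa j : ℂ) * z ^ nn j := by
  rw [ff_eq]
  rw [← tsum_cc_eq (fun m => (cc m : ℂ) * z ^ m) (fun m hm => by simp [cc_eq_zero hm])]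
  exact tsum_congr fun j => by rw [cc_nn]

lemma ff_real {r : ℝ} (hr : 0 ≤ r) : ff (r : ℂ) = ((gg r : ℝ) : ℂ) := by
  rw [ff_tsum]
  have h1 : ∀ j : ℕ, (aa j : ℂ) * (r:ℂ) ^ nn j = ((aa j * r ^ nn j : ℝ) : ℂ) := by
    intro j; push_cast; ring
  rw [tsum_congr h1]
  exact (Complex.ofRealCLM.map_tsum (summable_term hr)).symm

lemma abs_ff_le (z : ℂ) : ‖ff z‖ ≤ gg ‖z‖ := by
  rw [ff_tsum]
  have hsn : Summable fun j => ‖(aa j : ℂ) * z ^ nn j‖ := by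
    refine (summable_term (norm_nonneg z)).congr fun j => ?_
    rw [norm_mul, norm_pow, Complex.norm_real,
      Real.norm_eq_abs, abs_of_nonneg (aa_pos j).le]
  calc ‖∑' j, (aa j : ℂ) * z ^ nn j‖ ≤ ∑' j, ‖(aa j : ℂ) * z ^ nn j‖ :=
        norm_tsum_le_tsum_norm hsn
  _ = gg ‖z‖ := by
      refine tsum_congr fun j => ?_
      rw [norm_mul, norm_pow, Complex.norm_real,
        Real.norm_eq_abs, abs_of_nonneg (aa_pos j).le]

lemma abs_ff_real {r : ℝ} (hr : 0 ≤ r) : ‖ff (r : ℂ)‖ = gg r := by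
  rw [ff_real hr, Complex.norm_real, Real.norm_eq_abs, abs_of_nonneg (gg_nonneg hr)]

lemma maxMod_eq {r : ℝ} (hr : 0 ≤ r) : maxMod ff r = gg r := by
  apply IsGreatest.csSup_eq
  constructor
  · exact ⟨(r : ℂ), by simp [abs_of_nonneg hr], abs_ff_real hr⟩
  · rintro y ⟨z, hz, rfl⟩
    simp only [Set.mem_setOf_eq] at hz
    calc ‖ff z‖ ≤ gg ‖z‖ := abs_ff_le z
    _ = gg r := by rw [hz]

lemma muEps_eq {ε r : ℝ} (hr : 0 ≤ r) : muEps ff ε r = (gg r) ^ ε := by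
  rw [muEps, maxMod_eq hr]

lemma weakly : weaklyRegular ff := by
  rintro ε ⟨hε0, hε1⟩ R hR hyp
  obtain ⟨J, hkey⟩ := key_eps hε0
  set S : ℝ := max R (Real.exp (TT J)) with hS_def
  have hSR : R ≤ S := le_max_left _ _
  have hSexp : Real.exp ((TT J : ℝ)) ≤ S := le_max_right _ _
  have hS_pos : 0 < S := lt_of_lt_of_le (exp_pos _) hSexp
  have hTJ1 : (1:ℝ) ≤ (TT J : ℝ) := by
    have : (8:ℝ) ≤ TT J := by exact_mod_cast TT_ge_eight J
    linarith
  have hexp1S : Real.exp 1 ≤ S := (exp_le_exp.mpr hTJ1).trans hSexp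
  have h1S : (1:ℝ) ≤ S := by
    calc (1:ℝ) ≤ Real.exp 1 := by nlinarith [Real.add_one_le_exp (1:ℝ)]
    _ ≤ S := hexp1S
  have hΦ_mono : ∀ {a b : ℝ}, 1 ≤ a → a ≤ b →
      Real.exp ((Real.log a) ^ 2) ≤ Real.exp ((Real.log b) ^ 2) := by
    intro a b ha hab
    apply exp_le_exp.mpr
    apply pow_le_pow_left₀ (Real.log_nonneg ha) (Real.log_le_log (by linarith) hab)
  have hself : ∀ {s : ℝ}, Real.exp 1 ≤ s → s ≤ Real.exp ((Real.log s) ^ 2) := by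
    intro s hs
    have hs_pos : 0 < s := lt_of_lt_of_le (exp_pos _) hs
    have hl1 : 1 ≤ Real.log s := by
      rw [← Real.log_exp 1]
      exact Real.log_le_log (exp_pos _) hs
    calc s = Real.exp (Real.log s) := (Real.exp_log hs_pos).symm
    _ ≤ Real.exp ((Real.log s) ^ 2) := exp_le_exp.mpr (by nlinarith)
  -- key inequality in radius form
  have hkeyr : ∀ s : ℝ, Real.exp ((TT J : ℝ)) ≤ s →
      Real.exp ((Real.log (gg s)) ^ 2) ≤ muEps ff ε (Real.exp ((Real.log s) ^ 2)) := by
    intro s hs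
    have hs_pos : 0 < s := lt_of_lt_of_le (exp_pos _) hs
    have hx : (TT J : ℝ) ≤ Real.log s := by
      rw [← Real.log_exp ((TT J : ℝ))]
      exact Real.log_le_log (exp_pos _) hs
    have hk := hkey (Real.log s) hx
    rw [muEps_eq (exp_pos _).le, Real.rpow_def_of_pos (gg_pos_exp _)]
    apply exp_le_exp.mpr
    calc (Real.log (gg s)) ^ 2 = (Real.log (gg (Real.exp (Real.log s)))) ^ 2 := by
          rw [Real.exp_log hs_pos]
    _ ≤ ε * Real.log (gg (Real.exp ((Real.log s) ^ 2))) := hk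
    _ = Real.log (gg (Real.exp ((Real.log s) ^ 2))) * ε := mul_comm _ _
  -- the orbit
  have hv_succ : ∀ n : ℕ, (maxMod ff)^[n+1] R = maxMod ff ((maxMod ff)^[n] R) :=
    fun n => Function.iterate_succ_apply' _ _ _
  have hvR : ∀ n, R ≤ (maxMod ff)^[n] R := by
    intro n
    induction n with
    | zero => exact le_refl _
    | succ n ih => rw [hv_succ]; exact ih.trans (hyp _ ih).le
  have hw_pos : ∀ n : ℕ, 0 < max ((maxMod ff)^[n] R) S := fun n =>
    lt_of_lt_of_le hS_pos (le_max_right _ _)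
  have main : ∀ n : ℕ,
      Real.exp ((Real.log (max ((maxMod ff)^[n] R) S)) ^ 2) ≤
        (muEps ff ε)^[n] (Real.exp ((Real.log S) ^ 2)) := by
    intro n
    induction n with
    | zero =>
        simp only [Function.iterate_zero, id_eq]
        rw [max_eq_right hSR]
    | succ n ih =>
        set v := (maxMod ff)^[n] R with hv
        set w := max v S with hw
        have hwS : S ≤ w := le_max_right _ _
        have hwv : v ≤ w := le_max_left _ _
        have hwR : R ≤ w := (hvR n).trans hwv
        have hw1 : (1:ℝ) ≤ w := h1S.trans hwS
        have hgg_w : max ((maxMod ff)^[n+1] R) S ≤ gg w := by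
          apply max_le
          · rw [hv_succ, maxMod_eq (hR.le.trans (hvR n))]
            exact gg_mono (hR.le.trans (hvR n)) hwv
          · have h := hyp w hwR
            rw [maxMod_eq (lt_of_lt_of_le hR hwR).le] at h
            exact hwS.trans h.le
        have hstep := hkeyr w (hSexp.trans hwS)
        have hmono2 : muEps ff ε (Real.exp ((Real.log w) ^ 2)) ≤
            muEps ff ε ((muEps ff ε)^[n] (Real.exp ((Real.log S) ^ 2))) := by
          rw [muEps_eq (exp_pos _).le, muEps_eq ((exp_pos ((Real.log w) ^ 2)).le.trans ih)]
          exact Real.rpow_le_rpow (gg_nonneg (exp_pos _).le)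
            (gg_mono (exp_pos _).le ih) hε0.le
        have hΦw : Real.exp ((Real.log (max ((maxMod ff)^[n+1] R) S)) ^ 2) ≤
            Real.exp ((Real.log (gg w)) ^ 2) :=
          hΦ_mono (h1S.trans (le_max_right _ _)) hgg_w
        calc Real.exp ((Real.log (max ((maxMod ff)^[n+1] R) S)) ^ 2)
            ≤ Real.exp ((Real.log (gg w)) ^ 2) := hΦw
        _ ≤ muEps ff ε (Real.exp ((Real.log w) ^ 2)) := hstep
        _ ≤ muEps ff ε ((muEps ff ε)^[n] (Real.exp ((Real.log S) ^ 2))) := hmono2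
        _ = (muEps ff ε)^[n+1] (Real.exp ((Real.log S) ^ 2)) :=
            (Function.iterate_succ_apply' _ _ _).symm
  refine ⟨Real.exp ((Real.log S) ^ 2), exp_pos _, fun n => ?_⟩
  calc (maxMod ff)^[n] R ≤ max ((maxMod ff)^[n] R) S := le_max_left _ _
  _ ≤ Real.exp ((Real.log (max ((maxMod ff)^[n] R) S)) ^ 2) :=
      hself (hexp1S.trans (le_max_right _ _))
  _ ≤ (muEps ff ε)^[n] (Real.exp ((Real.log S) ^ 2)) := main n

set_option maxHeartbeats 1000000 in
lemma nlr : ∀ r₁ > (1:ℝ), ∀ k > (1:ℝ), ∀ d > (1:ℝ),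
    ∃ r ≥ r₁, maxMod ff (r ^ k) < (maxMod ff r) ^ (k * d) := by
  intro r₁ hr₁ k hk d hd
  obtain ⟨m, hm⟩ := pow_unbounded_of_one_lt
    (max (max k (k * d / (d - 1))) (Real.log r₁)) (one_lt_two (α := ℝ))
  have hkpos : (0:ℝ) < k := lt_trans one_pos hk
  have hdpos : (0:ℝ) < d - 1 := by linarith
  have h2m : (2:ℝ) ^ m ≤ (TT m : ℝ) := by exact_mod_cast pow_le_TT m
  have h8m : (8:ℝ) ≤ TT m := by exact_mod_cast TT_ge_eight m
  have hTTm_pos : (0:ℝ) < TT m := by linarith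
  have hTT1 : (1:ℝ) ≤ TT m := by linarith
  have hKeq : (TT (m+1) : ℝ) = TT m * 2 ^ (2*m+1) := by exact_mod_cast TT_succ_eq m
  have h2pow : (2:ℝ) ^ m ≤ (2:ℝ) ^ (2*m+1) := by
    apply pow_le_pow_right₀ (by norm_num) (by omega)
  set t : ℝ := (TT (m+1) : ℝ) / k with ht_def
  have htk : t * k = (TT (m+1) : ℝ) := div_mul_cancel₀ _ hkpos.ne'
  have hkle : k ≤ (2:ℝ) ^ (2*m+1) := by
    have h : k ≤ max (max k (k * d / (d - 1))) (Real.log r₁) :=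
      le_trans (le_max_left _ _) (le_max_left _ _)
    exact (h.trans hm.le).trans h2pow
  have ht_ge : (TT m : ℝ) ≤ t := by
    rw [ht_def, le_div_iff₀ hkpos]
    calc (TT m : ℝ) * k ≤ TT m * 2 ^ (2*m+1) :=
          mul_le_mul_of_nonneg_left hkle hTTm_pos.le
    _ = TT (m+1) := hKeq.symm
  set r : ℝ := Real.exp t with hr_def
  have hr_pos : 0 < r := exp_pos t
  have hrr1 : r₁ ≤ r := by
    have hlr : Real.log r₁ ≤ t := by
      calc Real.log r₁ ≤ max (max k (k * d / (d - 1))) (Real.log r₁) := le_max_right _ _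
      _ ≤ (2:ℝ) ^ m := hm.le
      _ ≤ TT m := h2m
      _ ≤ t := ht_ge
    calc r₁ = Real.exp (Real.log r₁) := (Real.exp_log (by linarith)).symm
    _ ≤ Real.exp t := exp_le_exp.mpr hlr
  have hrk : r ^ k = Real.exp ((TT (m+1) : ℝ)) := by
    rw [hr_def, Real.rpow_def_of_pos (exp_pos t), Real.log_exp, htk]
  refine ⟨r, hrr1, ?_⟩
  rw [hrk, maxMod_eq (exp_pos _).le, maxMod_eq hr_pos.le]
  -- upper bound for gg (exp (TT (m+1)))
  have hup := g_upper (m+1) ((TT (m+1) : ℝ))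
    (fun m' hm' => by exact_mod_cast TT_mono.monotone (by omega : m' ≤ m+1)) (le_refl _)
  -- lower bound for gg r
  have hlow : Real.exp (yy (m+1) t) ≤ gg r := by
    rw [hr_def]; exact gg_lower (m+1) t
  have hkd1 : (1:ℝ) < k * d := by nlinarith
  have hrpow : Real.exp (yy (m+1) t * (k * d)) ≤ (gg r) ^ (k * d) := by
    calc Real.exp (yy (m+1) t * (k * d))
        = (Real.exp (yy (m+1) t)) ^ (k * d) := by
          rw [Real.rpow_def_of_pos (exp_pos _), Real.log_exp]
    _ ≤ (gg r) ^ (k * d) := Real.rpow_le_rpow (exp_pos _).le hlow (by positivity)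
  refine lt_of_le_of_lt hup (lt_of_lt_of_le ?_ hrpow)
  -- main numeric inequality
  set n : ℝ := (nn (m+1) : ℝ) with hn_def
  have hn_pos : (0:ℝ) < n := by rw [hn_def]; exact_mod_cast nn_pos (m+1)
  set b : ℝ := (bb (m+1) : ℝ) with hb_def
  have hb0 : (0:ℝ) ≤ b := by rw [hb_def]; exact bb_nonneg (m+1)
  have hble : b ≤ n * TT m := by rw [hb_def, hn_def]; exact_mod_cast bb_le_real m
  have hm5n : ((m:ℝ) + 1 + 4) ≤ n := by
    rw [hn_def]
    exact_mod_cast add_five_le_nn m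
  have hlogle : Real.log ((m:ℝ) + 1 + 4) ≤ n * TT m := by
    calc Real.log ((m:ℝ) + 1 + 4) ≤ (m:ℝ) + 1 + 4 := Real.log_le_self (by positivity)
    _ ≤ n := hm5n
    _ ≤ n * TT m := le_mul_of_one_le_right hn_pos.le hTT1
  have hKd : k * d * (TT m : ℝ) < (d - 1) * TT (m+1) := by
    have h1 : k * d / (d-1) < (2:ℝ) ^ (2*m+1) :=
      lt_of_lt_of_le (lt_of_le_of_lt ((le_max_right _ _).trans (le_max_left _ _)) hm) h2pow
    have h2 : k * d < (d-1) * (2:ℝ) ^ (2*m+1) := by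
      rw [div_lt_iff₀ hdpos] at h1
      linarith
    calc k * d * (TT m : ℝ) < (d-1) * (2:ℝ) ^ (2*m+1) * TT m :=
          mul_lt_mul_of_pos_right h2 hTTm_pos
    _ = (d - 1) * TT (m+1) := by rw [hKeq]; ring
  -- transform goal
  have hyyK : yy (m+1) ((TT (m+1) : ℝ)) = n * TT (m+1) - b := by
    rw [yy, ← hn_def, ← hb_def]
  have hyyt : yy (m+1) t = n * t - b := by rw [yy, ← hn_def, ← hb_def]
  rw [hyyK, hyyt]
  have hlhs : (↑(m+1) + 4 : ℝ) * Real.exp (n * TT (m+1) - b)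
      = Real.exp (Real.log ((m:ℝ) + 1 + 4) + (n * TT (m+1) - b)) := by
    rw [Real.exp_add, Real.exp_log (by positivity)]
    push_cast
    ring
  rw [hlhs, Real.exp_lt_exp]
  have e1 : (n * t - b) * (k * d) = d * (n * TT (m+1)) - (k*d) * b := by
    have : n * t * (k * d) = d * (n * TT (m+1)) := by
      calc n * t * (k * d) = n * (t * k) * d := by ring
      _ = d * (n * TT (m+1)) := by rw [htk]; ring
    linear_combination this
  rw [e1]
  have hA : (k*d) * b - b ≤ (k*d) * (n * TT m) - n * TT m := by
    nlinarith [mul_le_mul_of_nonneg_left hble (show (0:ℝ) ≤ k*d - 1 by linarith)]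
  have hC : (k*d) * (n * TT m) < d * (n * TT (m+1)) - n * TT (m+1) := by
    have := mul_lt_mul_of_pos_left hKd hn_pos
    nlinarith [this]
  linarith

lemma not_poly : ¬ ∃ p : Polynomial ℂ, ∀ z, ff z = p.eval z := by
  rintro ⟨p, hp⟩
  set D := p.natDegree with hD
  set C : ℝ := ∑ i ∈ Finset.range (D+1), ‖p.coeff i‖ with hC_def
  have hC0 : 0 ≤ C := Finset.sum_nonneg fun i _ => norm_nonneg _
  have hbound : ∀ x : ℝ, 1 ≤ x → gg x ≤ C * x ^ D := by
    intro x hx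
    have h0x : (0:ℝ) ≤ x := by linarith
    rw [← abs_ff_real h0x, hp]
    rw [Polynomial.eval_eq_sum_range]
    calc ‖∑ i ∈ Finset.range (D+1), p.coeff i * (x:ℂ) ^ i‖
        ≤ ∑ i ∈ Finset.range (D+1), ‖p.coeff i * (x:ℂ) ^ i‖ :=
          norm_sum_le _ _
    _ ≤ ∑ i ∈ Finset.range (D+1), ‖p.coeff i‖ * x ^ D := by
        apply Finset.sum_le_sum
        intro i hi
        rw [Finset.mem_range] at hi
        rw [norm_mul, norm_pow, Complex.norm_real, Real.norm_eq_abs, abs_of_nonneg h0x]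
        exact mul_le_mul_of_nonneg_left
          (pow_le_pow_right₀ hx (by omega)) (norm_nonneg _)
    _ = C * x ^ D := by rw [← Finset.sum_mul]
  set x : ℝ := max 1 ((C+1) / aa D) with hx_def
  have hx1 : (1:ℝ) ≤ x := le_max_left _ _
  have hx0 : (0:ℝ) ≤ x := by linarith
  have hx2 : (C+1)/aa D ≤ x := le_max_right _ _
  have haD : 0 < aa D := aa_pos D
  have h1 : C + 1 ≤ aa D * x := by
    rw [div_le_iff₀ haD] at hx2
    linarith
  have h2 : aa D * x ^ nn D ≤ gg x := gg_lower_r hx0 D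
  have h3 : aa D * x ^ (D+1) ≤ aa D * x ^ nn D :=
    mul_le_mul_of_nonneg_left (pow_le_pow_right₀ hx1 (lt_nn D)) haD.le
  have h4 : (C+1) * x ^ D ≤ aa D * x ^ (D+1) := by
    have he : aa D * x ^ (D+1) = (aa D * x) * x ^ D := by ring
    rw [he]
    exact mul_le_mul_of_nonneg_right h1 (pow_nonneg hx0 D)
  have h5 : gg x ≤ C * x ^ D := hbound x hx1
  have h6 : (0:ℝ) < x ^ D := pow_pos (lt_of_lt_of_le one_pos hx1) D
  nlinarith

end Stmt17

theorem stmt_17 :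
    ∃ f : ℂ → ℂ, TranscendentalEntire f ∧ weaklyRegular f ∧
      ∀ r₁ > (1:ℝ), ∀ k > (1:ℝ), ∀ d > (1:ℝ),
        ∃ r ≥ r₁, maxMod f (r ^ k) < (maxMod f r) ^ (k * d) :=
  ⟨Stmt17.ff, ⟨Stmt17.ff_diff, Stmt17.not_poly⟩, Stmt17.weakly, Stmt17.nlr⟩
end
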